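/- arXiv:2502.08256 — 7 statements merged into one kernel-verified Lean document; each statement's English description precedes it below -/
import Mathlib

section
/- Let λ be a Young diagram contained in the k×m rectangle with d boxes, with row lengths λ_1 ≥ ⋯ ≥ λ_k and column lengths λ'_1 ≥ ⋯ ≥ λ'_m (the transposed diagram). For all upper-triangular matrices A ∈ ℂ^{k×k} (entries a_{il}) and B ∈ ℂ^{m×m} (entries b_{jr}), the induced action on the Schubert vector satisfies Λ^d(A⊗B)(v_λ) = (∏_{i=1}^k a_{ii}^{λ_i}) · (∏_{j=1}^m b_{jj}^{λ'_j}) · v_λ. In particular, v_λ is a highest weight vector of weight (λ, λ') for the action of GL(ℂ^k) × GL(ℂ^m). -/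
open TensorProduct

noncomputable section

set_option synthInstance.maxHeartbeats 400000
set_option maxHeartbeats 1000000

/-- The complex vector space `ℂ^k ⊗ ℂ^m`. -/
abbrev TensorC (k m : ℕ) := TensorProduct ℂ (Fin k → ℂ) (Fin m → ℂ)

/-- The Schubert vector `v_λ = (e_{i₁}⊗f_{j₁}) ∧ ⋯ ∧ (e_{i_d}⊗f_{j_d})` in
`⋀^d_ℂ(ℂ^k ⊗ ℂ^m)` determined by an enumeration `c` of the cells of a Young diagram. -/
def schubertVecC (k m d : ℕ) (c : Fin d → Fin k × Fin m) : ExteriorAlgebra ℂ (TensorC k m) :=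
  ExteriorAlgebra.ιMulti ℂ d fun t =>
    (Pi.single (c t).1 (1 : ℂ)) ⊗ₜ[ℂ] (Pi.single (c t).2 (1 : ℂ))

/-- The action of a pair of complex matrices `(A, B)` on the exterior algebra of `ℂ^k ⊗ ℂ^m`
via the tensor product map `A ⊗ B`; its restriction to degree `d` is `Λ^d(A⊗B)`. -/
def actC (k m : ℕ) (A : Matrix (Fin k) (Fin k) ℂ) (B : Matrix (Fin m) (Fin m) ℂ) :
    ExteriorAlgebra ℂ (TensorC k m) →ₐ[ℂ] ExteriorAlgebra ℂ (TensorC k m) :=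
  ExteriorAlgebra.map (TensorProduct.map (Matrix.toLin' A) (Matrix.toLin' B))

lemma aux_image {k m d : ℕ} (lam : YoungDiagram) (hcard : lam.card = d)
    (c : Fin d → Fin k × Fin m) (hcinj : Function.Injective c)
    (hcmem : ∀ t, (((c t).1 : ℕ), ((c t).2 : ℕ)) ∈ lam.cells) :
    Finset.image (fun t => (((c t).1 : ℕ), ((c t).2 : ℕ))) Finset.univ = lam.cells := by
  have hinj : Function.Injective (fun t => (((c t).1 : ℕ), ((c t).2 : ℕ))) := by
    intro s t h
    simp only [Prod.mk.injEq] at h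
    exact hcinj (Prod.ext (Fin.ext h.1) (Fin.ext h.2))
  apply Finset.eq_of_subset_of_card_le
  · intro x hx
    simp only [Finset.mem_image, Finset.mem_univ, true_and] at hx
    obtain ⟨t, rfl⟩ := hx
    exact hcmem t
  · rw [Finset.card_image_of_injective _ hinj, Finset.card_univ, Fintype.card_fin]
    exact le_of_eq hcard

lemma aux_count {k m d : ℕ} (lam : YoungDiagram) (hcard : lam.card = d)
    (c r : Fin d → Fin k × Fin m) (hcinj : Function.Injective c)
    (hcmem : ∀ t, (((c t).1 : ℕ), ((c t).2 : ℕ)) ∈ lam.cells)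
    (hrinj : Function.Injective r)
    (hle : ∀ t, (r t).1 ≤ (c t).1 ∧ (r t).2 ≤ (c t).2) : r = c := by
  have hrmem : ∀ t, (((r t).1 : ℕ), ((r t).2 : ℕ)) ∈ lam.cells := fun t =>
    lam.up_left_mem (hle t).1 (hle t).2 (hcmem t)
  have himc := aux_image lam hcard c hcinj hcmem
  have himr := aux_image lam hcard r hrinj hrmem
  have hinjc : Function.Injective (fun t => (((c t).1 : ℕ), ((c t).2 : ℕ))) := by
    intro s t h
    simp only [Prod.mk.injEq] at h
    exact hcinj (Prod.ext (Fin.ext h.1) (Fin.ext h.2))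
  have hinjr : Function.Injective (fun t => (((r t).1 : ℕ), ((r t).2 : ℕ))) := by
    intro s t h
    simp only [Prod.mk.injEq] at h
    exact hrinj (Prod.ext (Fin.ext h.1) (Fin.ext h.2))
  have hsum : ∀ f : ℕ × ℕ → ℕ,
      (∑ t : Fin d, f (((r t).1 : ℕ), ((r t).2 : ℕ)))
        = ∑ t : Fin d, f (((c t).1 : ℕ), ((c t).2 : ℕ)) := by
    intro f
    have e1 : ∑ x ∈ lam.cells, f x = ∑ t : Fin d, f (((r t).1 : ℕ), ((r t).2 : ℕ)) := by
      rw [← himr]; exact Finset.sum_image (fun x _ y _ h => hinjr h)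
    have e2 : ∑ x ∈ lam.cells, f x = ∑ t : Fin d, f (((c t).1 : ℕ), ((c t).2 : ℕ)) := by
      rw [← himc]; exact Finset.sum_image (fun x _ y _ h => hinjc h)
    rw [← e1, ← e2]
  have h1 : ∀ t : Fin d, ((r t).1 : ℕ) = ((c t).1 : ℕ) := by
    have heq := hsum (fun x => x.1)
    have hpt := (Finset.sum_eq_sum_iff_of_le (s := Finset.univ)
      (f := fun t => ((r t).1 : ℕ)) (g := fun t => ((c t).1 : ℕ))
      (fun t _ => ((hle t).1 : ((r t).1 : ℕ) ≤ ((c t).1 : ℕ)))).1 heq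
    exact fun t => hpt t (Finset.mem_univ t)
  have h2 : ∀ t : Fin d, ((r t).2 : ℕ) = ((c t).2 : ℕ) := by
    have heq := hsum (fun x => x.2)
    have hpt := (Finset.sum_eq_sum_iff_of_le (s := Finset.univ)
      (f := fun t => ((r t).2 : ℕ)) (g := fun t => ((c t).2 : ℕ))
      (fun t _ => ((hle t).2 : ((r t).2 : ℕ) ≤ ((c t).2 : ℕ)))).1 heq
    exact fun t => hpt t (Finset.mem_univ t)
  funext t
  exact Prod.ext (Fin.ext (h1 t)) (Fin.ext (h2 t))

lemma aux_prod_row {k m d : ℕ} (lam : YoungDiagram) (hcard : lam.card = d)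
    (c : Fin d → Fin k × Fin m) (hcinj : Function.Injective c)
    (hcmem : ∀ t, (((c t).1 : ℕ), ((c t).2 : ℕ)) ∈ lam.cells) (f : Fin k → ℂ) :
    (∏ t : Fin d, f (c t).1) = ∏ i : Fin k, f i ^ lam.rowLen (i : ℕ) := by
  classical
  rw [← Finset.prod_fiberwise_of_maps_to (g := fun t => (c t).1)
    (fun t _ => Finset.mem_univ ((c t).1)) (fun t => f (c t).1)]
  apply Finset.prod_congr rfl
  intro i _
  have hconst : ∀ t ∈ Finset.univ.filter (fun t => (c t).1 = i), f (c t).1 = f i := by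
    intro t ht
    rw [Finset.mem_filter] at ht
    rw [ht.2]
  rw [Finset.prod_congr rfl hconst, Finset.prod_const]
  congr 1
  rw [lam.rowLen_eq_card]
  apply Finset.card_bij (fun t _ => (((c t).1 : ℕ), ((c t).2 : ℕ)))
  · intro t ht
    rw [Finset.mem_filter] at ht
    rw [YoungDiagram.mem_row_iff]
    refine ⟨(YoungDiagram.mem_cells _).1 (hcmem t), ?_⟩
    simp [ht.2]
  · intro a ha b hb h
    simp only [Prod.mk.injEq] at h
    exact hcinj (Prod.ext (Fin.ext h.1) (Fin.ext h.2))
  · intro b hb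
    rw [YoungDiagram.mem_row_iff] at hb
    have hbc : b ∈ lam.cells := (YoungDiagram.mem_cells _).2 hb.1
    rw [← aux_image lam hcard c hcinj hcmem] at hbc
    simp only [Finset.mem_image, Finset.mem_univ, true_and] at hbc
    obtain ⟨t, rfl⟩ := hbc
    exact ⟨t, Finset.mem_filter.2 ⟨Finset.mem_univ t, Fin.ext hb.2⟩, rfl⟩

lemma aux_prod_col {k m d : ℕ} (lam : YoungDiagram) (hcard : lam.card = d)
    (c : Fin d → Fin k × Fin m) (hcinj : Function.Injective c)
    (hcmem : ∀ t, (((c t).1 : ℕ), ((c t).2 : ℕ)) ∈ lam.cells) (f : Fin m → ℂ) :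
    (∏ t : Fin d, f (c t).2) = ∏ j : Fin m, f j ^ lam.colLen (j : ℕ) := by
  classical
  rw [← Finset.prod_fiberwise_of_maps_to (g := fun t => (c t).2)
    (fun t _ => Finset.mem_univ ((c t).2)) (fun t => f (c t).2)]
  apply Finset.prod_congr rfl
  intro j _
  have hconst : ∀ t ∈ Finset.univ.filter (fun t => (c t).2 = j), f (c t).2 = f j := by
    intro t ht
    rw [Finset.mem_filter] at ht
    rw [ht.2]
  rw [Finset.prod_congr rfl hconst, Finset.prod_const]
  congr 1
  rw [lam.colLen_eq_card]
  apply Finset.card_bij (fun t _ => (((c t).1 : ℕ), ((c t).2 : ℕ)))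
  · intro t ht
    rw [Finset.mem_filter] at ht
    rw [YoungDiagram.mem_col_iff]
    refine ⟨(YoungDiagram.mem_cells _).1 (hcmem t), ?_⟩
    simp [ht.2]
  · intro a ha b hb h
    simp only [Prod.mk.injEq] at h
    exact hcinj (Prod.ext (Fin.ext h.1) (Fin.ext h.2))
  · intro b hb
    rw [YoungDiagram.mem_col_iff] at hb
    have hbc : b ∈ lam.cells := (YoungDiagram.mem_cells _).2 hb.1
    rw [← aux_image lam hcard c hcinj hcmem] at hbc
    simp only [Finset.mem_image, Finset.mem_univ, true_and] at hbc
    obtain ⟨t, rfl⟩ := hbc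
    exact ⟨t, Finset.mem_filter.2 ⟨Finset.mem_univ t, Fin.ext hb.2⟩, rfl⟩

lemma aux_map_basis {k m : ℕ} (A : Matrix (Fin k) (Fin k) ℂ) (B : Matrix (Fin m) (Fin m) ℂ)
    (i : Fin k) (j : Fin m) :
    TensorProduct.map (Matrix.toLin' A) (Matrix.toLin' B)
        ((Pi.single i (1:ℂ)) ⊗ₜ[ℂ] (Pi.single j (1:ℂ)))
      = ∑ q : Fin k × Fin m,
          (A q.1 i * B q.2 j) • ((Pi.single q.1 (1:ℂ)) ⊗ₜ[ℂ] (Pi.single q.2 (1:ℂ))) := by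
  have h1 : Matrix.toLin' A (Pi.single i (1:ℂ))
      = ∑ i' : Fin k, A i' i • (Pi.single i' (1:ℂ) : Fin k → ℂ) := by
    rw [Matrix.toLin'_apply, Matrix.mulVec_single]
    ext x
    simp [Pi.single_apply]
  have h2 : Matrix.toLin' B (Pi.single j (1:ℂ))
      = ∑ j' : Fin m, B j' j • (Pi.single j' (1:ℂ) : Fin m → ℂ) := by
    rw [Matrix.toLin'_apply, Matrix.mulVec_single]
    ext x
    simp [Pi.single_apply]
  rw [TensorProduct.map_tmul, h1, h2, TensorProduct.sum_tmul, Fintype.sum_prod_type]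
  apply Finset.sum_congr rfl
  intro i' _
  rw [TensorProduct.tmul_sum]
  apply Finset.sum_congr rfl
  intro j' _
  rw [TensorProduct.tmul_smul, TensorProduct.smul_tmul', TensorProduct.smul_tmul', smul_smul,
    mul_comm]

/-- For every upper-triangular `A ∈ ℂ^{k×k}` and `B ∈ ℂ^{m×m}`,
`Λ^d(A⊗B)(v_λ) = (∏ᵢ a_{ii}^{λ_i}) (∏ⱼ b_{jj}^{λ'_j}) · v_λ`, where `λ_i` are the row lengths
and `λ'_j` the column lengths of `λ`.  In particular, `v_λ` is a highest weight vector of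
weight `(λ, λ')` for `GL(ℂ^k) × GL(ℂ^m)`.  (`Matrix.BlockTriangular · id` means
upper-triangular; `rowLen`/`colLen` take 0-indexed rows/columns.) -/
theorem stmt_4 (k m d : ℕ) (hk : 1 ≤ k) (hm : 1 ≤ m)
    (lam : YoungDiagram) (hcard : lam.card = d)
    (hrect : ∀ x ∈ lam.cells, x.1 < k ∧ x.2 < m)
    (c : Fin d → Fin k × Fin m) (hcinj : Function.Injective c)
    (hcmem : ∀ t, (((c t).1 : ℕ), ((c t).2 : ℕ)) ∈ lam.cells)
    (A : Matrix (Fin k) (Fin k) ℂ) (B : Matrix (Fin m) (Fin m) ℂ)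
    (hA : A.BlockTriangular id) (hB : B.BlockTriangular id) :
    actC k m A B (schubertVecC k m d c)
      = ((∏ i : Fin k, A i i ^ lam.rowLen (i : ℕ)) *
          (∏ j : Fin m, B j j ^ lam.colLen (j : ℕ))) • schubertVecC k m d c := by
  classical
  set w : Fin k × Fin m → TensorC k m :=
    fun p => (Pi.single p.1 (1:ℂ)) ⊗ₜ[ℂ] (Pi.single p.2 (1:ℂ)) with hw
  have hexp : actC k m A B (schubertVecC k m d c)
      = ∑ r : Fin d → Fin k × Fin m,
          (∏ t : Fin d, (A (r t).1 (c t).1 * B (r t).2 (c t).2)) •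
            ExteriorAlgebra.ιMulti ℂ d (w ∘ r) := by
    rw [schubertVecC, actC, ExteriorAlgebra.map_apply_ιMulti]
    have hcomp : (TensorProduct.map (Matrix.toLin' A) (Matrix.toLin' B)) ∘
        (fun t => (Pi.single (c t).1 (1:ℂ)) ⊗ₜ[ℂ] (Pi.single (c t).2 (1:ℂ)))
        = fun t => ∑ q : Fin k × Fin m, (A q.1 (c t).1 * B q.2 (c t).2) • w q := by
      funext t
      exact aux_map_basis A B (c t).1 (c t).2
    rw [hcomp]
    have hms := MultilinearMap.map_sum
      ((ExteriorAlgebra.ιMulti ℂ d (M := TensorC k m)).toMultilinearMap)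
      (g := fun t q => (A q.1 (c t).1 * B q.2 (c t).2) • w q)
    rw [AlternatingMap.coe_multilinearMap] at hms
    rw [hms]
    apply Finset.sum_congr rfl
    intro r _
    have := MultilinearMap.map_smul_univ
      ((ExteriorAlgebra.ιMulti ℂ d (M := TensorC k m)).toMultilinearMap)
      (fun t => A (r t).1 (c t).1 * B (r t).2 (c t).2) (fun t => w (r t))
    rw [AlternatingMap.coe_multilinearMap] at this
    exact this
  rw [hexp]
  rw [Finset.sum_eq_single c]
  · have hprod : (∏ t : Fin d, (A (c t).1 (c t).1 * B (c t).2 (c t).2))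
        = (∏ i : Fin k, A i i ^ lam.rowLen (i : ℕ)) *
          (∏ j : Fin m, B j j ^ lam.colLen (j : ℕ)) := by
      rw [Finset.prod_mul_distrib,
        aux_prod_row lam hcard c hcinj hcmem (fun i => A i i),
        aux_prod_col lam hcard c hcinj hcmem (fun j => B j j)]
    rw [hprod]
    rfl
  · intro r _ hrc
    by_cases hle : ∀ t, (r t).1 ≤ (c t).1 ∧ (r t).2 ≤ (c t).2
    · by_cases hrinj : Function.Injective r
      · exact absurd (aux_count lam hcard c r hcinj hcmem hrinj hle) hrc
      · have hz : ExteriorAlgebra.ιMulti ℂ d (w ∘ r) = 0 := by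
          apply AlternatingMap.map_eq_zero_of_not_injective
          intro h
          exact hrinj (Function.Injective.of_comp h)
        rw [hz, smul_zero]
    · push_neg at hle
      obtain ⟨t, ht⟩ := hle
      have hzero : A (r t).1 (c t).1 * B (r t).2 (c t).2 = 0 := by
        by_cases h1 : (r t).1 ≤ (c t).1
        · have h2 : (c t).2 < (r t).2 := ht h1
          rw [hB h2, mul_zero]
        · have h1' : (c t).1 < (r t).1 := lt_of_not_ge h1
          rw [hA h1', zero_mul]
      rw [Finset.prod_eq_zero (Finset.mem_univ t) hzero, zero_smul]
  · intro h
    exact absurd (Finset.mem_univ c) h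
end
end

section
/- For a Young diagram λ contained in the k×m rectangle with d boxes, the ℝ-linear span of the orthogonal orbit {Λ^d(g⊗h)·v_λ : g ∈ O(k), h ∈ O(m)} inside ⋀^d(ℝ^k ⊗ ℝ^m) equals the ℝ-linear span of the full general-linear orbit {Λ^d(A⊗B)·v_λ : A ∈ GL(ℝ^k), B ∈ GL(ℝ^m)}. -/
open TensorProduct

noncomputable section

set_option synthInstance.maxHeartbeats 400000
set_option maxHeartbeats 1000000

/-- The real vector space `ℝ^k ⊗ ℝ^m`. -/
abbrev TensorR (k m : ℕ) := TensorProduct ℝ (Fin k → ℝ) (Fin m → ℝ)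

/-- The Schubert vector `v_λ = (e_{i₁}⊗f_{j₁}) ∧ ⋯ ∧ (e_{i_d}⊗f_{j_d})` in
`⋀^d(ℝ^k ⊗ ℝ^m)` determined by an enumeration `c` of the cells of a Young diagram. -/
def schubertVecR (k m d : ℕ) (c : Fin d → Fin k × Fin m) : ExteriorAlgebra ℝ (TensorR k m) :=
  ExteriorAlgebra.ιMulti ℝ d fun t =>
    (Pi.single (c t).1 (1 : ℝ)) ⊗ₜ[ℝ] (Pi.single (c t).2 (1 : ℝ))

/-- The action of a pair of matrices `(A, B)` on the exterior algebra of `ℝ^k ⊗ ℝ^m` via the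
tensor product map `A ⊗ B`; its restriction to degree `d` is `Λ^d(A⊗B)`. -/
def actR (k m : ℕ) (A : Matrix (Fin k) (Fin k) ℝ) (B : Matrix (Fin m) (Fin m) ℝ) :
    ExteriorAlgebra ℝ (TensorR k m) →ₐ[ℝ] ExteriorAlgebra ℝ (TensorR k m) :=
  ExteriorAlgebra.map (TensorProduct.map (Matrix.toLin' A) (Matrix.toLin' B))

open scoped Matrix

/-- `actR` is multiplicative in the pair of matrices. -/
lemma actR_mul (k m : ℕ) (A A' : Matrix (Fin k) (Fin k) ℝ) (B B' : Matrix (Fin m) (Fin m) ℝ)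
    (x : ExteriorAlgebra ℝ (TensorR k m)) :
    actR k m (A * A') (B * B') x = actR k m A B (actR k m A' B' x) := by
  unfold actR
  rw [← AlgHom.comp_apply, ExteriorAlgebra.map_comp_map, Matrix.toLin'_mul, Matrix.toLin'_mul,
    TensorProduct.map_comp]

/-- Upper triangular matrices act on the Schubert vector by a scalar. -/
lemma actR_triangular {k m d : ℕ} (lam : YoungDiagram) (hcard : lam.card = d)
    (c : Fin d → Fin k × Fin m) (hcinj : Function.Injective c)
    (hcmem : ∀ t, (((c t).1 : ℕ), ((c t).2 : ℕ)) ∈ lam.cells)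
    (R : Matrix (Fin k) (Fin k) ℝ) (S : Matrix (Fin m) (Fin m) ℝ)
    (hR : ∀ a i : Fin k, i < a → R a i = 0) (hS : ∀ b j : Fin m, j < b → S b j = 0) :
    actR k m R S (schubertVecR k m d c)
      = (∏ t, R (c t).1 (c t).1 * S (c t).2 (c t).2) • schubertVecR k m d c := by
  classical
  -- every cell of `lam` (inside the rectangle) is in the range of `c`
  have himg : ∀ p : Fin k × Fin m, (((p.1 : ℕ), (p.2 : ℕ)) ∈ lam.cells) → ∃ t, c t = p := by
    intro p hp
    have hinj2 : Function.Injective (fun t => (((c t).1 : ℕ), ((c t).2 : ℕ))) := by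
      intro a b hab
      simp only [Prod.mk.injEq] at hab
      exact hcinj (Prod.ext (Fin.ext hab.1) (Fin.ext hab.2))
    have hsub : Finset.image (fun t => (((c t).1 : ℕ), ((c t).2 : ℕ))) Finset.univ ⊆ lam.cells := by
      intro x hx
      obtain ⟨t, _, rfl⟩ := Finset.mem_image.mp hx
      exact hcmem t
    have heq : Finset.image (fun t => (((c t).1 : ℕ), ((c t).2 : ℕ))) Finset.univ = lam.cells := by
      apply Finset.eq_of_subset_of_card_le hsub
      rw [Finset.card_image_of_injective _ hinj2, Finset.card_univ, Fintype.card_fin]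
      exact le_of_eq hcard
    rw [← heq] at hp
    obtain ⟨t, _, ht⟩ := Finset.mem_image.mp hp
    refine ⟨t, ?_⟩
    simp only [Prod.mk.injEq] at ht
    exact Prod.ext (Fin.ext ht.1) (Fin.ext ht.2)
  -- expand each vector in the one-dimensional pieces
  have key : ∀ t : Fin d,
      TensorProduct.map (Matrix.toLin' R) (Matrix.toLin' S)
        ((Pi.single (c t).1 (1:ℝ)) ⊗ₜ[ℝ] (Pi.single (c t).2 (1:ℝ)))
      = ∑ p : Fin k × Fin m, (R p.1 (c t).1 * S p.2 (c t).2) •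
          ((Pi.single p.1 (1:ℝ)) ⊗ₜ[ℝ] (Pi.single p.2 (1:ℝ))) := by
    intro t
    rw [TensorProduct.map_tmul]
    have h1 : Matrix.toLin' R (Pi.single (c t).1 (1:ℝ))
        = ∑ a, R a (c t).1 • (Pi.single a (1:ℝ) : Fin k → ℝ) := by
      funext j
      simp [Matrix.toLin'_apply, Matrix.mulVec_single, Finset.sum_apply, Pi.single_apply,
        mul_comm]
    have h2 : Matrix.toLin' S (Pi.single (c t).2 (1:ℝ))
        = ∑ b, S b (c t).2 • (Pi.single b (1:ℝ) : Fin m → ℝ) := by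
      funext j
      simp [Matrix.toLin'_apply, Matrix.mulVec_single, Finset.sum_apply, Pi.single_apply,
        mul_comm]
    rw [h1, h2, TensorProduct.sum_tmul, Fintype.sum_prod_type]
    refine Finset.sum_congr rfl fun a _ => ?_
    rw [TensorProduct.tmul_sum]
    refine Finset.sum_congr rfl fun b _ => ?_
    rw [TensorProduct.smul_tmul', TensorProduct.tmul_smul, ← TensorProduct.smul_tmul',
      smul_smul, mul_comm (S b (c t).2)]
    exact TensorProduct.smul_tmul' _ _ _
  -- apply multilinearity
  unfold actR schubertVecR
  rw [ExteriorAlgebra.map_apply_ιMulti]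
  have hcomp : (TensorProduct.map (Matrix.toLin' R) (Matrix.toLin' S)) ∘
      (fun t : Fin d => (Pi.single (c t).1 (1:ℝ)) ⊗ₜ[ℝ] (Pi.single (c t).2 (1:ℝ)))
      = fun t : Fin d => ∑ p : Fin k × Fin m, (R p.1 (c t).1 * S p.2 (c t).2) •
          ((Pi.single p.1 (1:ℝ)) ⊗ₜ[ℝ] (Pi.single p.2 (1:ℝ))) :=
    funext key
  rw [hcomp]
  have hexp := MultilinearMap.map_sum
    (ExteriorAlgebra.ιMulti ℝ d (M := TensorR k m)).toMultilinearMap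
    (fun (t : Fin d) (p : Fin k × Fin m) => (R p.1 (c t).1 * S p.2 (c t).2) •
      ((Pi.single p.1 (1:ℝ)) ⊗ₜ[ℝ] (Pi.single p.2 (1:ℝ))))
  simp only [AlternatingMap.coe_multilinearMap] at hexp
  rw [hexp]
  -- each summand is a scalar multiple of a wedge of basis tensors
  have hsmul : ∀ r : Fin d → Fin k × Fin m,
      (ExteriorAlgebra.ιMulti ℝ d (M := TensorR k m))
        (fun t => (R (r t).1 (c t).1 * S (r t).2 (c t).2) •
          ((Pi.single (r t).1 (1:ℝ)) ⊗ₜ[ℝ] (Pi.single (r t).2 (1:ℝ))))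
      = (∏ t, R (r t).1 (c t).1 * S (r t).2 (c t).2) •
        (ExteriorAlgebra.ιMulti ℝ d (M := TensorR k m))
          (fun t => (Pi.single (r t).1 (1:ℝ)) ⊗ₜ[ℝ] (Pi.single (r t).2 (1:ℝ))) := by
    intro r
    exact (ExteriorAlgebra.ιMulti ℝ d (M := TensorR k m)).toMultilinearMap.map_smul_univ _ _
  -- all terms except `r = c` vanish
  rw [Fintype.sum_eq_single c]
  · exact hsmul c
  · intro r hrc
    by_cases hle : ∀ t, (r t).1 ≤ (c t).1 ∧ (r t).2 ≤ (c t).2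
    · rw [hsmul r]
      by_cases hrinj : Function.Injective r
      · exfalso
        apply hrc
        -- r maps into the range of c with componentwise smaller coordinates; so r = c
        have hmem : ∀ t, ∃ t', c t' = r t := by
          intro t
          apply himg
          have hct := hcmem t
          rw [YoungDiagram.mem_cells] at hct ⊢
          exact lam.up_left_mem (by exact_mod_cast (hle t).1) (by exact_mod_cast (hle t).2) hct
        have himgeq : Finset.image r Finset.univ = Finset.image c Finset.univ := by
          apply Finset.eq_of_subset_of_card_le
          · intro x hx
            obtain ⟨t, _, rfl⟩ := Finset.mem_image.mp hx
            obtain ⟨t', ht'⟩ := hmem t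
            exact Finset.mem_image.mpr ⟨t', Finset.mem_univ _, ht'⟩
          · rw [Finset.card_image_of_injective _ hcinj, Finset.card_image_of_injective _ hrinj]
        have hsum : ∑ t, (((r t).1 : ℕ) + ((r t).2 : ℕ))
            = ∑ t, (((c t).1 : ℕ) + ((c t).2 : ℕ)) := by
          have h1 := Finset.sum_image (s := (Finset.univ : Finset (Fin d)))
            (f := fun p : Fin k × Fin m => ((p.1 : ℕ) + (p.2 : ℕ)))
            (g := r) (fun x _ y _ h => hrinj h)
          have h2 := Finset.sum_image (s := (Finset.univ : Finset (Fin d)))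
            (f := fun p : Fin k × Fin m => ((p.1 : ℕ) + (p.2 : ℕ)))
            (g := c) (fun x _ y _ h => hcinj h)
          rw [← h1, ← h2, himgeq]
        have hpt := (Finset.sum_eq_sum_iff_of_le (fun t _ =>
          add_le_add (by exact_mod_cast (hle t).1) (by exact_mod_cast (hle t).2))).mp hsum
        funext t
        have h3 := hpt t (Finset.mem_univ t)
        have h4 : ((r t).1 : ℕ) = ((c t).1 : ℕ) ∧ ((r t).2 : ℕ) = ((c t).2 : ℕ) := by
          have hle1 : ((r t).1 : ℕ) ≤ ((c t).1 : ℕ) := by exact_mod_cast (hle t).1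
          have hle2 : ((r t).2 : ℕ) ≤ ((c t).2 : ℕ) := by exact_mod_cast (hle t).2
          omega
        exact Prod.ext (Fin.ext h4.1) (Fin.ext h4.2)
      · -- repeated vector: the wedge vanishes
        obtain ⟨t1, t2, heq2, hne⟩ : ∃ t1 t2, r t1 = r t2 ∧ t1 ≠ t2 := by
          rw [Function.not_injective_iff] at hrinj
          exact hrinj
        rw [AlternatingMap.map_eq_zero_of_eq _ _ (by rw [heq2]) hne, smul_zero]
    · -- some coefficient is zero by triangularity
      push_neg at hle
      obtain ⟨t, ht⟩ := hle
      rw [hsmul r]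
      have hz : R (r t).1 (c t).1 * S (r t).2 (c t).2 = 0 := by
        by_cases h1 : (r t).1 ≤ (c t).1
        · have h2 := ht h1
          rw [hS (r t).2 (c t).2 h2, mul_zero]
        · rw [hR (r t).1 (c t).1 (lt_of_not_ge h1), zero_mul]
      rw [Finset.prod_eq_zero (Finset.mem_univ t) hz, zero_smul]

/-- Casting away an exotic `DecidableEq` instance on a diagonal matrix. -/
lemma diagonal_cast {n : ℕ} (d : DecidableEq (Fin n)) (z : Zero ℝ) (v : Fin n → ℝ)
    (hz : @Zero.zero ℝ z = @Zero.zero ℝ Real.instZero) :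
    @Matrix.diagonal (Fin n) ℝ d z v
      = @Matrix.diagonal (Fin n) ℝ (instDecidableEqFin n) Real.instZero v := by
  have h : d = instDecidableEqFin n := Subsingleton.elim _ _
  subst h
  funext i j
  show @ite _ (i = j) (instDecidableEqFin n i j) (v i) (@Zero.zero ℝ z)
      = @ite _ (i = j) (instDecidableEqFin n i j) (v i) (@Zero.zero ℝ Real.instZero)
  rw [hz]

/-- Casting away an exotic `DecidableEq` instance on the identity matrix. -/
lemma one_cast {n : ℕ} (d : DecidableEq (Fin n)) (z : Zero ℝ) (o : One ℝ)
    (hz : @Zero.zero ℝ z = @Zero.zero ℝ Real.instZero)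
    (ho : @One.one ℝ o = @One.one ℝ Real.instOne) :
    @One.one (Matrix (Fin n) (Fin n) ℝ) (@Matrix.one (Fin n) ℝ d z o)
      = @OfNat.ofNat (Matrix (Fin n) (Fin n) ℝ) 1
          (@One.toOfNat1 _ (@Matrix.one (Fin n) ℝ (instDecidableEqFin n) Real.instZero
            Real.instOne)) := by
  have h : d = instDecidableEqFin n := Subsingleton.elim _ _
  subst h
  funext i j
  show @ite _ (i = j) (instDecidableEqFin n i j) (@One.one ℝ o) (@Zero.zero ℝ z)
      = @ite _ (i = j) (instDecidableEqFin n i j) (@One.one ℝ Real.instOne)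
          (@Zero.zero ℝ Real.instZero)
  rw [hz, ho]

/-- Conjugating a positive definite matrix by an invertible matrix preserves
positive definiteness. -/
lemma posDef_conj {n : ℕ} {S B : Matrix (Fin n) (Fin n) ℝ} (hS : S.PosDef) (hB : IsUnit B) :
    (B * S * Bᴴ).PosDef := by
  refine Matrix.PosDef.of_dotProduct_mulVec_pos ?_ ?_
  · have := hS.1.eq
    simp only [Matrix.IsHermitian, Matrix.conjTranspose_mul, Matrix.conjTranspose_conjTranspose,
      this, Matrix.mul_assoc]
  · intro x hx
    have hBH : IsUnit Bᴴ := by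
      rw [Matrix.isUnit_iff_isUnit_det, Matrix.det_conjTranspose]
      exact (Matrix.isUnit_iff_isUnit_det B |>.mp hB).star
    have hx' : Bᴴ *ᵥ x ≠ 0 := by
      intro h0
      exact hx ((Matrix.mulVec_injective_iff_isUnit.mpr hBH) (by rw [h0, Matrix.mulVec_zero]))
    have e1 : (B * S * Bᴴ) *ᵥ x = B *ᵥ (S *ᵥ (Bᴴ *ᵥ x)) := by
      rw [Matrix.mulVec_mulVec, Matrix.mulVec_mulVec, Matrix.mul_assoc]
    rw [e1, Matrix.dotProduct_mulVec (star x)]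
    have e2 : star x ᵥ* B = star (Bᴴ *ᵥ x) := by
      rw [Matrix.star_mulVec, Matrix.conjTranspose_conjTranspose]
    rw [e2]
    exact hS.dotProduct_mulVec_pos hx'

/-- QR decomposition of a real invertible matrix: `A = Q R` with `Q` orthogonal and
`R` upper triangular. -/
lemma exists_qr {n : ℕ} (A : Matrix (Fin n) (Fin n) ℝ) (hA : IsUnit A) :
    ∃ Q ∈ Matrix.orthogonalGroup (Fin n) ℝ, ∃ R : Matrix (Fin n) (Fin n) ℝ,
      (∀ a i : Fin n, i < a → R a i = 0) ∧ A = Q * R := by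
  classical
  have hAH : IsUnit Aᴴ := by
    rw [Matrix.isUnit_iff_isUnit_det, Matrix.det_conjTranspose]
    exact (Matrix.isUnit_iff_isUnit_det A |>.mp hA).star
  -- `Aᴴ A` is positive definite
  have hS : (Aᴴ * A).PosDef := by
    refine Matrix.PosDef.of_dotProduct_mulVec_pos ?_ ?_
    · exact Matrix.isHermitian_conjTranspose_mul_self A
    · intro x hx
      have h0 := (Matrix.posSemidef_conjTranspose_mul_self A).dotProduct_mulVec_nonneg x
      refine lt_of_le_of_ne h0 ?_
      intro heq
      apply hx
      have hzz := ((Matrix.posSemidef_conjTranspose_mul_self A).dotProduct_mulVec_zero_iff x).mp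
        heq.symm
      have hu : IsUnit (Aᴴ * A) := hAH.mul hA
      exact (Matrix.mulVec_injective_iff_isUnit.mpr hu) (by rw [hzz, Matrix.mulVec_zero])
  haveI : WellFoundedLT (Fin n) := inferInstance
  set N := LDL.lowerInv hS with hNdef
  haveI : Invertible N := by
    obtain ⟨M, hM1, hM2⟩ := LDL.invertibleLowerInv hS
    rw [← hNdef] at hM1 hM2
    refine ⟨M, ?_, ?_⟩
    · rw [hM1]
    · rw [hM2]

  have hNunit : IsUnit N := isUnit_of_invertible N
  -- the LDL diagonal matrix, with ambient instances
  have hdiag_amb : LDL.diag hS = Matrix.diagonal (LDL.diagEntries hS) :=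
    diagonal_cast _ _ _ rfl
  -- positivity of the diagonal entries
  have hD : (Matrix.diagonal (LDL.diagEntries hS)).PosDef := by
    rw [← hdiag_amb, LDL.diag_eq_lowerInv_conj hS]
    exact posDef_conj hS hNunit
  have hDpos : ∀ i, 0 < LDL.diagEntries hS i :=
    fun i => Matrix.posDef_diagonal_iff.mp hD i
  set s : Fin n → ℝ := fun i => Real.sqrt (LDL.diagEntries hS i) with hsdef
  have hs : ∀ i, 0 < s i := fun i => Real.sqrt_pos.mpr (hDpos i)
  have hss : ∀ i, s i * s i = LDL.diagEntries hS i := fun i =>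
    Real.mul_self_sqrt (hDpos i).le
  -- definitions of Q and R
  refine ⟨A * Nᴴ * Matrix.diagonal (fun i => (s i)⁻¹), ?_, Matrix.diagonal s * (N⁻¹)ᴴ, ?_, ?_⟩
  · -- orthogonality
    rw [Matrix.mem_orthogonalGroup_iff' (Fin n) ℝ, ← Matrix.conjTranspose_eq_transpose_of_trivial]
    have hdiagH : (Matrix.diagonal (fun i => (s i)⁻¹))ᴴ = Matrix.diagonal (fun i => (s i)⁻¹) := by
      simp [Matrix.diagonal_conjTranspose]
    have hconj : N * (Aᴴ * A) * Nᴴ = Matrix.diagonal (LDL.diagEntries hS) := by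
      rw [← hdiag_amb]
      exact (LDL.diag_eq_lowerInv_conj hS).symm
    calc (A * Nᴴ * Matrix.diagonal (fun i => (s i)⁻¹))ᴴ
          * (A * Nᴴ * Matrix.diagonal (fun i => (s i)⁻¹))
        = Matrix.diagonal (fun i => (s i)⁻¹) * (N * (Aᴴ * A) * Nᴴ)
          * Matrix.diagonal (fun i => (s i)⁻¹) := by
          simp only [Matrix.conjTranspose_mul, Matrix.conjTranspose_conjTranspose, hdiagH,
            Matrix.mul_assoc]
      _ = Matrix.diagonal (fun i => (s i)⁻¹) * Matrix.diagonal (LDL.diagEntries hS)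
          * Matrix.diagonal (fun i => (s i)⁻¹) := by rw [hconj]
      _ = 1 := by
          rw [Matrix.diagonal_mul_diagonal, Matrix.diagonal_mul_diagonal]
          have hfun : (fun i => (s i)⁻¹ * LDL.diagEntries hS i * (s i)⁻¹) = fun _ => (1:ℝ) := by
            funext i
            rw [← hss i]
            have hne : s i ≠ 0 := (hs i).ne'
            field_simp
          rw [hfun, Matrix.diagonal_one]
  · -- upper triangularity of R
    intro a i hia
    have hNbt : N.BlockTriangular (OrderDual.toDual : Fin n → (Fin n)ᵒᵈ) := by
      intro i j hij
      exact LDL.lowerInv_triangular hS (by exact hij)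
    have hNinvbt := Matrix.blockTriangular_inv_of_blockTriangular hNbt
    have hNinv : N⁻¹ i a = 0 :=
      hNinvbt (show (OrderDual.toDual : Fin n → (Fin n)ᵒᵈ) a < OrderDual.toDual i from hia)
    rw [Matrix.diagonal_mul, Matrix.conjTranspose_apply, hNinv, star_zero, mul_zero]
  · -- A = Q * R
    have hNN : N⁻¹ * N = 1 := Matrix.nonsing_inv_mul N (Matrix.isUnit_det_of_invertible N)
    calc A = A * 1 := by rw [mul_one]
      _ = A * (N⁻¹ * N)ᴴ := by rw [hNN, Matrix.conjTranspose_one]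
      _ = A * (Nᴴ * (N⁻¹)ᴴ) := by rw [Matrix.conjTranspose_mul]
      _ = A * Nᴴ * Matrix.diagonal (fun i => (s i)⁻¹) * (Matrix.diagonal s * (N⁻¹)ᴴ) := by
          have hd1 : Matrix.diagonal (fun i => (s i)⁻¹) * Matrix.diagonal s = 1 := by
            rw [Matrix.diagonal_mul_diagonal]
            have hfun : (fun i => (s i)⁻¹ * s i) = fun _ => (1:ℝ) := by
              funext i
              exact inv_mul_cancel₀ (hs i).ne'
            rw [hfun, Matrix.diagonal_one]
          rw [Matrix.mul_assoc (A * Nᴴ), ← Matrix.mul_assoc (Matrix.diagonal fun i => (s i)⁻¹),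
            hd1, Matrix.one_mul, ← Matrix.mul_assoc]
  
/-- The `ℝ`-linear span of the orthogonal orbit
`{Λ^d(g⊗h)·v_λ : g ∈ O(k), h ∈ O(m)}` equals the `ℝ`-linear span of the full general-linear
orbit `{Λ^d(A⊗B)·v_λ : A ∈ GL(ℝ^k), B ∈ GL(ℝ^m)}` inside `⋀^d(ℝ^k ⊗ ℝ^m)`. -/
theorem stmt_5 (k m d : ℕ) (hk : 1 ≤ k) (hm : 1 ≤ m)
    (lam : YoungDiagram) (hcard : lam.card = d)
    (hrect : ∀ x ∈ lam.cells, x.1 < k ∧ x.2 < m)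
    (c : Fin d → Fin k × Fin m) (hcinj : Function.Injective c)
    (hcmem : ∀ t, (((c t).1 : ℕ), ((c t).2 : ℕ)) ∈ lam.cells) :
    Submodule.span ℝ {w | ∃ g ∈ Matrix.orthogonalGroup (Fin k) ℝ,
        ∃ h ∈ Matrix.orthogonalGroup (Fin m) ℝ, w = actR k m g h (schubertVecR k m d c)}
      = Submodule.span ℝ {w | ∃ A : Matrix (Fin k) (Fin k) ℝ, ∃ B : Matrix (Fin m) (Fin m) ℝ,
          IsUnit A ∧ IsUnit B ∧ w = actR k m A B (schubertVecR k m d c)} := by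
  apply le_antisymm
  · apply Submodule.span_mono
    rintro w ⟨g, hg, h, hh, rfl⟩
    refine ⟨g, h, ?_, ?_, rfl⟩
    · rw [Matrix.mem_orthogonalGroup_iff (Fin k) ℝ] at hg
      have hd : g.det * (star g).det = 1 := by rw [← Matrix.det_mul, Matrix.star_eq_conjTranspose, Matrix.conjTranspose_eq_transpose_of_trivial, hg, Matrix.det_one]
      exact (Matrix.isUnit_iff_isUnit_det g).mpr (IsUnit.of_mul_eq_one _ hd)
    · rw [Matrix.mem_orthogonalGroup_iff (Fin m) ℝ] at hh
      have hd : h.det * (star h).det = 1 := by rw [← Matrix.det_mul, Matrix.star_eq_conjTranspose, Matrix.conjTranspose_eq_transpose_of_trivial, hh, Matrix.det_one]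
      exact (Matrix.isUnit_iff_isUnit_det h).mpr (IsUnit.of_mul_eq_one _ hd)
  · rw [Submodule.span_le]
    rintro w ⟨A, B, hA, hB, rfl⟩
    obtain ⟨QA, hQA, RA, hRA, rfl⟩ := exists_qr A hA
    obtain ⟨QB, hQB, RB, hRB, rfl⟩ := exists_qr B hB
    rw [actR_mul, actR_triangular lam hcard c hcinj hcmem RA RB hRA hRB, map_smul]
    exact Submodule.smul_mem _ _
      (Submodule.subset_span ⟨QA, hQA, QB, hQB, rfl⟩)
end
end

section
/- For a Young diagram λ contained in the k×m rectangle with d boxes, the ℂ-linear span of the complex general-linear orbit {Λ^d(A⊗B)·v_λ : A ∈ GL(ℂ^k), B ∈ GL(ℂ^m)} inside ⋀^d_ℂ(ℂ^k ⊗ ℂ^m) equals the ℂ-linear span of the real orthogonal orbit {Λ^d(g⊗h)·v_λ : g ∈ O(k), h ∈ O(m)}, where real orthogonal matrices are regarded as complex matrices via the inclusion ℝ ⊆ ℂ. -/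
open TensorProduct

noncomputable section

set_option synthInstance.maxHeartbeats 400000
set_option maxHeartbeats 1000000

/-! ### Auxiliary lemmas -/

/-- A multivariate polynomial over `ℂ` vanishing at all real points is zero. -/
lemma mv_real_vanish {ι : Type*} (P : MvPolynomial ι ℂ)
    (h : ∀ x : ι → ℝ, MvPolynomial.eval (fun i => (x i : ℂ)) P = 0) : P = 0 := by
  classical
  set PR : MvPolynomial ι ℝ :=
    ∑ mo ∈ P.support, MvPolynomial.monomial mo (P.coeff mo).re with hPR
  set PI : MvPolynomial ι ℝ :=
    ∑ mo ∈ P.support, MvPolynomial.monomial mo (P.coeff mo).im with hPI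
  have coeffPR : ∀ mo, PR.coeff mo = (P.coeff mo).re := by
    intro mo
    rw [hPR, MvPolynomial.coeff_sum]
    simp only [MvPolynomial.coeff_monomial]
    rw [Finset.sum_ite_eq' P.support mo (fun mo' => (P.coeff mo').re)]
    by_cases hmo : mo ∈ P.support
    · simp [hmo]
    · simp [hmo, MvPolynomial.notMem_support_iff.mp hmo]
  have coeffPI : ∀ mo, PI.coeff mo = (P.coeff mo).im := by
    intro mo
    rw [hPI, MvPolynomial.coeff_sum]
    simp only [MvPolynomial.coeff_monomial]
    rw [Finset.sum_ite_eq' P.support mo (fun mo' => (P.coeff mo').im)]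
    by_cases hmo : mo ∈ P.support
    · simp [hmo]
    · simp [hmo, MvPolynomial.notMem_support_iff.mp hmo]
  have hsplit : P = (PR.map (algebraMap ℝ ℂ))
      + (MvPolynomial.C Complex.I) * (PI.map (algebraMap ℝ ℂ)) := by
    apply MvPolynomial.ext
    intro mo
    rw [MvPolynomial.coeff_add, MvPolynomial.coeff_C_mul, MvPolynomial.coeff_map,
      MvPolynomial.coeff_map, coeffPR, coeffPI]
    apply Complex.ext <;> simp
  have evmap : ∀ (Q : MvPolynomial ι ℝ) (x : ι → ℝ),
      MvPolynomial.eval (fun i => (x i : ℂ)) (Q.map (algebraMap ℝ ℂ))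
        = ((MvPolynomial.eval x Q : ℝ) : ℂ) := by
    intro Q x
    rw [MvPolynomial.eval_map]
    have := MvPolynomial.eval₂_comp_left (algebraMap ℝ ℂ) (RingHom.id ℝ) x Q
    simp only [MvPolynomial.eval₂_id, RingHom.comp_id] at this
    rw [show ((((MvPolynomial.eval x) Q : ℝ)) : ℂ)
      = (algebraMap ℝ ℂ) ((MvPolynomial.eval x) Q) from rfl, this]
    rfl
  have hzR : ∀ x : ι → ℝ, MvPolynomial.eval x PR = 0 ∧ MvPolynomial.eval x PI = 0 := by
    intro x
    have := h x
    rw [hsplit] at this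
    rw [map_add, map_mul, evmap, evmap, MvPolynomial.eval_C] at this
    constructor
    · have := congrArg Complex.re this; simpa using this
    · have := congrArg Complex.im this; simpa using this
  have hPRz : PR = 0 := by
    apply MvPolynomial.funext (R := ℝ)
    intro x; simpa using (hzR x).1
  have hPIz : PI = 0 := by
    apply MvPolynomial.funext (R := ℝ)
    intro x; simpa using (hzR x).2
  rw [hsplit, hPRz, hPIz]
  simp

/-- A strictly "up-left" injective deformation of an enumeration of the cells of a Young
diagram must be the identity deformation. -/
lemma young_force_eq {k m d : ℕ} (lam : YoungDiagram) (hcard : lam.card = d)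
    (c : Fin d → Fin k × Fin m) (hcinj : Function.Injective c)
    (hcmem : ∀ t, (((c t).1 : ℕ), ((c t).2 : ℕ)) ∈ lam.cells)
    (p : Fin d → Fin k × Fin m) (hpinj : Function.Injective p)
    (hle1 : ∀ t, (p t).1 ≤ (c t).1) (hle2 : ∀ t, (p t).2 ≤ (c t).2) : p = c := by
  classical
  have hpmem : ∀ t, (((p t).1 : ℕ), ((p t).2 : ℕ)) ∈ lam.cells := by
    intro t
    rw [YoungDiagram.mem_cells] at *
    exact lam.up_left_mem ((Fin.le_def.mp (hle1 t))) ((Fin.le_def.mp (hle2 t)))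
      ((lam.mem_cells _).mp (hcmem t))
  let cHat : Fin d → lam.cells := fun t => ⟨(((c t).1 : ℕ), ((c t).2 : ℕ)), hcmem t⟩
  have hcHatinj : Function.Injective cHat := by
    intro t t' h
    apply hcinj
    have h' : ((((c t).1 : ℕ), ((c t).2 : ℕ)) : ℕ × ℕ) = (((c t').1 : ℕ), ((c t').2 : ℕ)) :=
      congrArg Subtype.val h
    simp only [Prod.mk.injEq] at h'
    exact Prod.ext (Fin.val_injective h'.1) (Fin.val_injective h'.2)
  have hcard' : Fintype.card (lam.cells : Finset (ℕ × ℕ)) = d := by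
    rw [Fintype.card_coe]; exact hcard
  have hbij : Function.Bijective cHat :=
    (Fintype.bijective_iff_injective_and_card cHat).mpr ⟨hcHatinj, by simp [hcard']⟩
  let eq := Equiv.ofBijective cHat hbij
  let e : Fin d → Fin d := fun t => eq.symm ⟨(((p t).1 : ℕ), ((p t).2 : ℕ)), hpmem t⟩
  have he : ∀ t, (((c (e t)).1 : ℕ), ((c (e t)).2 : ℕ)) = (((p t).1 : ℕ), ((p t).2 : ℕ)) := by
    intro t
    have : cHat (e t) = ⟨(((p t).1 : ℕ), ((p t).2 : ℕ)), hpmem t⟩ := eq.apply_symm_apply _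
    exact congrArg Subtype.val this
  have heinj : Function.Injective e := by
    intro t t' h
    apply hpinj
    have h1 := (he t).symm.trans
      ((congrArg (fun s => (((c s).1 : ℕ), ((c s).2 : ℕ))) h).trans (he t'))
    simp only [Prod.mk.injEq] at h1
    exact Prod.ext (Fin.val_injective h1.1) (Fin.val_injective h1.2)
  have key1 : ∀ t, ((p t).1 : ℕ) = ((c t).1 : ℕ) := by
    have filt : ∀ a : ℕ,
        Finset.univ.filter (fun t => ((p t).1 : ℕ) ≤ a)
          = Finset.univ.filter (fun t => ((c t).1 : ℕ) ≤ a) := by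
      intro a
      apply (Finset.eq_of_subset_of_card_le ?_ ?_).symm
      · intro t ht
        simp only [Finset.mem_filter, Finset.mem_univ, true_and] at *
        exact le_trans ((Fin.le_def.mp (hle1 t))) ht
      · apply Finset.card_le_card_of_injOn e
        · intro t ht
          simp only [Finset.mem_coe, Finset.mem_filter, Finset.mem_univ, true_and] at *
          have := congrArg Prod.fst (he t)
          simp only at this
          rw [this]; exact ht
        · exact fun t _ t' _ h => heinj h
    intro t
    by_contra hne
    have hlt : ((p t).1 : ℕ) < ((c t).1 : ℕ) :=
      lt_of_le_of_ne ((Fin.le_def.mp (hle1 t))) hne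
    have h1 : t ∈ Finset.univ.filter (fun t' => ((p t').1 : ℕ) ≤ ((p t).1 : ℕ)) := by
      simp
    rw [filt _] at h1
    simp only [Finset.mem_filter, Finset.mem_univ, true_and] at h1
    omega
  have key2 : ∀ t, ((p t).2 : ℕ) = ((c t).2 : ℕ) := by
    have filt : ∀ a : ℕ,
        Finset.univ.filter (fun t => ((p t).2 : ℕ) ≤ a)
          = Finset.univ.filter (fun t => ((c t).2 : ℕ) ≤ a) := by
      intro a
      apply (Finset.eq_of_subset_of_card_le ?_ ?_).symm
      · intro t ht
        simp only [Finset.mem_filter, Finset.mem_univ, true_and] at *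
        exact le_trans ((Fin.le_def.mp (hle2 t))) ht
      · apply Finset.card_le_card_of_injOn e
        · intro t ht
          simp only [Finset.mem_coe, Finset.mem_filter, Finset.mem_univ, true_and] at *
          have := congrArg Prod.snd (he t)
          simp only at this
          rw [this]; exact ht
        · exact fun t _ t' _ h => heinj h
    intro t
    by_contra hne
    have hlt : ((p t).2 : ℕ) < ((c t).2 : ℕ) :=
      lt_of_le_of_ne ((Fin.le_def.mp (hle2 t))) hne
    have h1 : t ∈ Finset.univ.filter (fun t' => ((p t').2 : ℕ) ≤ ((p t).2 : ℕ)) := by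
      simp
    rw [filt _] at h1
    simp only [Finset.mem_filter, Finset.mem_univ, true_and] at h1
    omega
  funext t
  exact Prod.ext (Fin.val_injective (key1 t)) (Fin.val_injective (key2 t))

lemma toLin'_single {k : ℕ} (A : Matrix (Fin k) (Fin k) ℂ) (i : Fin k) :
    Matrix.toLin' A (Pi.single i (1 : ℂ))
      = ∑ r, A r i • (Pi.single r (1 : ℂ) : Fin k → ℂ) := by
  funext r
  rw [Matrix.toLin'_apply]
  rw [Matrix.mulVec_single]
  simp [Finset.sum_apply, Pi.single_apply]

/-- Multilinear expansion of the action on a Schubert vector. -/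
lemma actC_expand (k m d : ℕ) (A : Matrix (Fin k) (Fin k) ℂ) (B : Matrix (Fin m) (Fin m) ℂ)
    (c : Fin d → Fin k × Fin m) :
    actC k m A B (schubertVecC k m d c)
      = ∑ p : Fin d → Fin k × Fin m,
          (∏ t, A (p t).1 (c t).1 * B (p t).2 (c t).2) • schubertVecC k m d p := by
  classical
  rw [actC, schubertVecC, ExteriorAlgebra.map_apply_ιMulti]
  have harg : (TensorProduct.map (Matrix.toLin' A) (Matrix.toLin' B)) ∘
        (fun t => (Pi.single (c t).1 (1 : ℂ)) ⊗ₜ[ℂ] (Pi.single (c t).2 (1 : ℂ)))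
      = fun t => ∑ p : Fin k × Fin m,
          (A p.1 (c t).1 * B p.2 (c t).2) •
            ((Pi.single p.1 (1 : ℂ)) ⊗ₜ[ℂ] (Pi.single p.2 (1 : ℂ))) := by
    funext t
    simp only [Function.comp_apply, TensorProduct.map_tmul]
    rw [toLin'_single, toLin'_single]
    rw [TensorProduct.sum_tmul, Fintype.sum_prod_type]
    apply Finset.sum_congr rfl
    intro r _
    rw [TensorProduct.tmul_sum]
    apply Finset.sum_congr rfl
    intro s _
    rw [← TensorProduct.smul_tmul', TensorProduct.tmul_smul, smul_comm]
    rw [smul_smul, mul_comm (B s (c t).2)]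
  rw [harg]
  have hms := MultilinearMap.map_sum
    (f := (ExteriorAlgebra.ιMulti ℂ d).toMultilinearMap)
    (g := fun t (p : Fin k × Fin m) => (A p.1 (c t).1 * B p.2 (c t).2) •
        ((Pi.single p.1 (1 : ℂ)) ⊗ₜ[ℂ] (Pi.single p.2 (1 : ℂ)) : TensorC k m))
  refine hms.trans ?_
  apply Finset.sum_congr rfl
  intro p _
  have := (ExteriorAlgebra.ιMulti ℂ d).toMultilinearMap.map_smul_univ
    (fun t => A (p t).1 (c t).1 * B (p t).2 (c t).2)
    (fun t => ((Pi.single (p t).1 (1 : ℂ)) ⊗ₜ[ℂ] (Pi.single (p t).2 (1 : ℂ)) : TensorC k m))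
  exact this.trans rfl

lemma actC_mul (k m : ℕ) (M N : Matrix (Fin k) (Fin k) ℂ) (M' N' : Matrix (Fin m) (Fin m) ℂ)
    (x : ExteriorAlgebra ℂ (TensorC k m)) :
    actC k m (M * N) (M' * N') x = actC k m M M' (actC k m N N' x) := by
  have h : TensorProduct.map (Matrix.toLin' (M * N)) (Matrix.toLin' (M' * N'))
      = (TensorProduct.map (Matrix.toLin' M) (Matrix.toLin' M')).comp
          (TensorProduct.map (Matrix.toLin' N) (Matrix.toLin' N')) := by
    rw [Matrix.toLin'_mul, Matrix.toLin'_mul, TensorProduct.map_comp]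
  rw [actC, actC, actC, h, ← ExteriorAlgebra.map_comp_map, AlgHom.comp_apply]

/-- Upper-triangular pairs act on the Schubert vector by a scalar. -/
lemma actC_triangular (k m d : ℕ) (lam : YoungDiagram) (hcard : lam.card = d)
    (c : Fin d → Fin k × Fin m) (hcinj : Function.Injective c)
    (hcmem : ∀ t, (((c t).1 : ℕ), ((c t).2 : ℕ)) ∈ lam.cells)
    (U : Matrix (Fin k) (Fin k) ℂ) (U' : Matrix (Fin m) (Fin m) ℂ)
    (hU : ∀ r s : Fin k, s < r → U r s = 0) (hU' : ∀ r s : Fin m, s < r → U' r s = 0) :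
    actC k m U U' (schubertVecC k m d c)
      = (∏ t, U (c t).1 (c t).1 * U' (c t).2 (c t).2) • schubertVecC k m d c := by
  classical
  rw [actC_expand]
  rw [Finset.sum_eq_single_of_mem c (Finset.mem_univ c)]
  intro p _ hpc
  by_cases hbig : ∃ t, (c t).1 < (p t).1 ∨ (c t).2 < (p t).2
  · obtain ⟨t, ht⟩ := hbig
    have : U (p t).1 (c t).1 * U' (p t).2 (c t).2 = 0 := by
      rcases ht with h1 | h2
      · rw [hU _ _ h1, zero_mul]
      · rw [hU' _ _ h2, mul_zero]
    rw [Finset.prod_eq_zero (Finset.mem_univ t) this, zero_smul]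
  · push_neg at hbig
    have hle1 : ∀ t, (p t).1 ≤ (c t).1 := fun t => (hbig t).1
    have hle2 : ∀ t, (p t).2 ≤ (c t).2 := fun t => (hbig t).2
    by_cases hinj : Function.Injective p
    · exact absurd (young_force_eq lam hcard c hcinj hcmem p hinj hle1 hle2) hpc
    · have hz : schubertVecC k m d p = 0 := by
        rw [Function.not_injective_iff] at hinj
        obtain ⟨t, t', hval, hne⟩ := hinj
        exact AlternatingMap.map_eq_zero_of_eq _ _ (by rw [hval]) hne
      rw [hz, smul_zero]

/-- QR decomposition of an arbitrary real square matrix. -/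
lemma real_QR (k : ℕ) (A : Matrix (Fin k) (Fin k) ℝ) :
    ∃ (Q R : Matrix (Fin k) (Fin k) ℝ), Q ∈ Matrix.orthogonalGroup (Fin k) ℝ ∧
      (∀ r s : Fin k, s < r → R r s = 0) ∧ A = Q * R := by
  classical
  have hdim : Module.finrank ℝ (EuclideanSpace ℝ (Fin k)) = Fintype.card (Fin k) := by
    simp [finrank_euclideanSpace]
  let f : Fin k → EuclideanSpace ℝ (Fin k) := fun j => WithLp.toLp 2 (fun i => A i j)
  let b : OrthonormalBasis (Fin k) ℝ (EuclideanSpace ℝ (Fin k)) :=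
    @InnerProductSpace.gramSchmidtOrthonormalBasis ℝ (EuclideanSpace ℝ (Fin k)) _ _ _ (Fin k) _ _
      (inferInstance : WellFoundedLT (Fin k)) _ _ hdim f
  refine ⟨Matrix.of (fun i j => b j i),
    Matrix.of (fun i j => (inner ℝ (b i) (f j) : ℝ)), ?_, ?_, ?_⟩
  · rw [Matrix.mem_orthogonalGroup_iff']
    ext i j
    have hb := orthonormal_iff_ite.mp b.orthonormal i j
    rw [PiLp.inner_apply] at hb
    simp only [Matrix.mul_apply, Matrix.star_apply, Matrix.one_apply, Matrix.of_apply,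
      Matrix.conjTranspose_apply, star_trivial]
    rw [← hb]
    apply Finset.sum_congr rfl
    intro r _
    simp [RCLike.inner_apply, mul_comm]
  · intro r s hsr
    exact @InnerProductSpace.gramSchmidtOrthonormalBasis_inv_triangular ℝ (EuclideanSpace ℝ (Fin k)) _ _ _ (Fin k) _ _
      (inferInstance : WellFoundedLT (Fin k)) _ _ hdim f _ _ hsr
  · ext i j
    have hrepr : (∑ r, (inner ℝ (b r) (f j) : ℝ) • b r : EuclideanSpace ℝ (Fin k)) = f j := by
      have := b.sum_repr (f j)
      simpa [b.repr_apply_apply] using this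
    have h2 : f j i = ∑ r, (inner ℝ (b r) (f j) : ℝ) * b r i := by
      conv_lhs => rw [← hrepr]
      have : ∀ (g : Fin k → EuclideanSpace ℝ (Fin k)), (∑ r, g r) i = ∑ r, g r i := by
        intro g
        rw [WithLp.ofLp_sum]; exact Finset.sum_apply i Finset.univ (fun r => (g r).ofLp)
      rw [this (fun r => (inner ℝ (b r) (f j) : ℝ) • b r)]
      apply Finset.sum_congr rfl
      intro r _
      rfl
    simp only [Matrix.mul_apply, Matrix.of_apply]
    calc A i j = f j i := rfl
      _ = ∑ r, (inner ℝ (b r) (f j) : ℝ) * b r i := h2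
      _ = ∑ r, b r i * (inner ℝ (b r) (f j) : ℝ) := by
          apply Finset.sum_congr rfl; intro r _; ring

/-- The `ℂ`-linear span of the complex general-linear orbit
`{Λ^d(A⊗B)·v_λ : A ∈ GL(ℂ^k), B ∈ GL(ℂ^m)}` inside `⋀^d_ℂ(ℂ^k ⊗ ℂ^m)` equals the `ℂ`-linear
span of the real orthogonal orbit `{Λ^d(g⊗h)·v_λ : g ∈ O(k), h ∈ O(m)}`, where real
orthogonal matrices are regarded as complex matrices entrywise via `ℝ ⊆ ℂ`. -/
theorem stmt_6 (k m d : ℕ) (hk : 1 ≤ k) (hm : 1 ≤ m)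
    (lam : YoungDiagram) (hcard : lam.card = d)
    (hrect : ∀ x ∈ lam.cells, x.1 < k ∧ x.2 < m)
    (c : Fin d → Fin k × Fin m) (hcinj : Function.Injective c)
    (hcmem : ∀ t, (((c t).1 : ℕ), ((c t).2 : ℕ)) ∈ lam.cells) :
    Submodule.span ℂ {w | ∃ A : Matrix (Fin k) (Fin k) ℂ, ∃ B : Matrix (Fin m) (Fin m) ℂ,
        IsUnit A ∧ IsUnit B ∧ w = actC k m A B (schubertVecC k m d c)}
      = Submodule.span ℂ {w | ∃ g ∈ Matrix.orthogonalGroup (Fin k) ℝ,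
          ∃ h ∈ Matrix.orthogonalGroup (Fin m) ℝ,
          w = actC k m (g.map fun x => (x : ℂ)) (h.map fun x => (x : ℂ))
                (schubertVecC k m d c)} := by
  classical
  set v := schubertVecC k m d c with hv
  set S := Submodule.span ℂ {w | ∃ g ∈ Matrix.orthogonalGroup (Fin k) ℝ,
          ∃ h ∈ Matrix.orthogonalGroup (Fin m) ℝ,
          w = actC k m (g.map fun x => (x : ℂ)) (h.map fun x => (x : ℂ)) v} with hS
  -- every actC value lies in S
  have hreal : ∀ (A₀ : Matrix (Fin k) (Fin k) ℝ) (B₀ : Matrix (Fin m) (Fin m) ℝ),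
      actC k m (A₀.map (fun x => (x : ℂ))) (B₀.map (fun x => (x : ℂ))) v ∈ S := by
    intro A₀ B₀
    obtain ⟨Q, R, hQ, hR, hQR⟩ := real_QR k A₀
    obtain ⟨Q', R', hQ', hR', hQR'⟩ := real_QR m B₀
    have hmap : A₀.map (fun x => (x : ℂ))
        = (Q.map fun x => (x : ℂ)) * (R.map fun x => (x : ℂ)) := by
      rw [hQR]
      ext i j
      simp only [Matrix.map_apply, Matrix.mul_apply]
      push_cast
      rfl
    have hmap' : B₀.map (fun x => (x : ℂ))
        = (Q'.map fun x => (x : ℂ)) * (R'.map fun x => (x : ℂ)) := by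
      rw [hQR']
      ext i j
      simp only [Matrix.map_apply, Matrix.mul_apply]
      push_cast
      rfl
    rw [hmap, hmap', actC_mul]
    rw [hv, actC_triangular k m d lam hcard c hcinj hcmem _ _
      (fun r s hrs => by rw [Matrix.map_apply, hR r s hrs, Complex.ofReal_zero])
      (fun r s hrs => by rw [Matrix.map_apply, hR' r s hrs, Complex.ofReal_zero])]
    rw [map_smul]
    refine Submodule.smul_mem _ _ (Submodule.subset_span ?_)
    exact ⟨Q, hQ, Q', hQ', rfl⟩
  have main : ∀ (A : Matrix (Fin k) (Fin k) ℂ) (B : Matrix (Fin m) (Fin m) ℂ),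
      actC k m A B v ∈ S := by
    intro A B
    suffices h0 : S.mkQ (actC k m A B v) = 0 by
      rwa [Submodule.mkQ_apply, Submodule.Quotient.mk_eq_zero] at h0
    rw [← Module.forall_dual_apply_eq_zero_iff ℂ]
    intro φ
    set ψ : ExteriorAlgebra ℂ (TensorC k m) →ₗ[ℂ] ℂ := φ.comp S.mkQ with hψ
    have hψS : ∀ w ∈ S, ψ w = 0 := by
      intro w hw
      have : S.mkQ w = 0 := by
        rw [Submodule.mkQ_apply, Submodule.Quotient.mk_eq_zero]; exact hw
      rw [hψ, LinearMap.comp_apply, this, map_zero]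
    set P : MvPolynomial ((Fin k × Fin k) ⊕ (Fin m × Fin m)) ℂ :=
      ∑ p : Fin d → Fin k × Fin m,
        MvPolynomial.C (ψ (schubertVecC k m d p)) *
          ∏ t, (MvPolynomial.X (Sum.inl ((p t).1, (c t).1))
                * MvPolynomial.X (Sum.inr ((p t).2, (c t).2))) with hP
    have heval : ∀ (A' : Matrix (Fin k) (Fin k) ℂ) (B' : Matrix (Fin m) (Fin m) ℂ),
        MvPolynomial.eval
            (Sum.elim (fun q : Fin k × Fin k => A' q.1 q.2)
              (fun q : Fin m × Fin m => B' q.1 q.2)) P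
          = ψ (actC k m A' B' v) := by
      intro A' B'
      rw [hv, actC_expand, map_sum, map_sum]
      apply Finset.sum_congr rfl
      intro p _
      rw [map_mul, MvPolynomial.eval_C, map_prod, map_smul]
      simp only [map_mul, MvPolynomial.eval_X, Sum.elim_inl, Sum.elim_inr, smul_eq_mul]
      ring
    have hPzero : P = 0 := by
      apply mv_real_vanish
      intro x
      have hx : (Sum.elim
            (fun q : Fin k × Fin k =>
              ((Matrix.of fun a b => x (Sum.inl (a, b))).map (fun t : ℝ => (t : ℂ))) q.1 q.2)
            (fun q : Fin m × Fin m =>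
              ((Matrix.of fun a b => x (Sum.inr (a, b))).map (fun t : ℝ => (t : ℂ))) q.1 q.2))
          = (fun i => (x i : ℂ)) := by
        funext i
        rcases i with ⟨a, b⟩ | ⟨a, b⟩ <;> rfl
      rw [← hx, heval]
      exact hψS _ (hreal _ _)
    have := heval A B
    rw [hPzero, map_zero] at this
    exact this.symm
  apply le_antisymm
  · rw [Submodule.span_le]
    rintro w ⟨A, B, _, _, rfl⟩
    exact main A B
  · rw [Submodule.span_le]
    rintro w ⟨g, hg, h, hh, rfl⟩
    apply Submodule.subset_span
    refine ⟨g.map (fun x => (x : ℂ)), h.map (fun x => (x : ℂ)), ?_, ?_, rfl⟩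
    · have hu : IsUnit g := ⟨⟨g, star g, hg.2, hg.1⟩, rfl⟩
      have := hu.map ((algebraMap ℝ ℂ).mapMatrix)
      simpa [RingHom.mapMatrix_apply] using this
    · have hu : IsUnit h := ⟨⟨h, star h, hh.2, hh.1⟩, rfl⟩
      have := hu.map ((algebraMap ℝ ℂ).mapMatrix)
      simpa [RingHom.mapMatrix_apply] using this

end
end

section
/- Let 0 < d < n. If w ∈ ⋀^d(ℝ^n) satisfies Λ^d(g)(w) = w for every g in the special orthogonal group SO(n), then w = 0. In other words, the subspace of SO(n)-invariant vectors in the d-th exterior power of ℝ^n is trivial for 0 < d < n. -/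
open scoped symmDiff

namespace Stmt10Aux

noncomputable section

/-- standard basis vectors of `ℝⁿ`, in the `pi_eq_sum_univ` form. -/
def bvec (n : ℕ) : Fin n → (Fin n → ℝ) := fun i j => if i = j then 1 else 0

/-- the basis-style generators of the `d`-th exterior power. -/
def eS (n d : ℕ) (S : Finset (Fin n)) (hS : S.card = d) : ExteriorAlgebra ℝ (Fin n → ℝ) :=
  ExteriorAlgebra.ιMulti ℝ d fun k => bvec n (S.orderIsoOfFin hS k)

def genSet (n d : ℕ) : Set (ExteriorAlgebra ℝ (Fin n → ℝ)) :=
  {x | ∃ (S : Finset (Fin n)) (hS : S.card = d), x = eS n d S hS}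

lemma span_le (n d : ℕ) :
    ⋀[ℝ]^d (Fin n → ℝ) ≤ Submodule.span ℝ (genSet n d) := by
  rw [← ExteriorAlgebra.ιMulti_span_fixedDegree]
  rw [Submodule.span_le]
  rintro _ ⟨v, rfl⟩
  have hv : v = fun k => ∑ i, v k i • bvec n i := by
    funext k; exact pi_eq_sum_univ (v k)
  rw [hv]
  rw [show ((ExteriorAlgebra.ιMulti ℝ d) fun k => ∑ i, v k i • bvec n i)
      = (ExteriorAlgebra.ιMulti ℝ d).toMultilinearMap fun k => ∑ i, v k i • bvec n i from rfl,
    MultilinearMap.map_sum]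
  refine Submodule.sum_mem _ fun r _ => ?_
  rw [MultilinearMap.map_smul_univ]
  refine Submodule.smul_mem _ _ ?_
  by_cases hr : Function.Injective r
  · set S : Finset (Fin n) := Finset.univ.image r with hSdef
    have hS : S.card = d := by
      rw [hSdef, Finset.card_image_of_injective _ hr, Finset.card_univ, Fintype.card_fin]
    have hmem : ∀ k, r k ∈ S := fun k => Finset.mem_image.2 ⟨k, Finset.mem_univ _, rfl⟩
    set σ : Fin d → Fin d := fun k => (S.orderIsoOfFin hS).symm ⟨r k, hmem k⟩ with hσdef
    have hσinj : Function.Injective σ := by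
      intro a b hab
      apply hr
      have := congrArg (fun x => ((S.orderIsoOfFin hS) x : Fin n)) hab
      simpa [hσdef] using this
    have hσbij : Function.Bijective σ := (Finite.injective_iff_bijective).1 hσinj
    let σe : Equiv.Perm (Fin d) := Equiv.ofBijective σ hσbij
    have hcomp : (fun k => bvec n (S.orderIsoOfFin hS k)) ∘ σe = fun k => bvec n (r k) := by
      funext k
      have hx : ((S.orderIsoOfFin hS) (σe k) : Fin n) = r k := by
        show ((S.orderIsoOfFin hS) (σ k) : Fin n) = r k
        simp [hσdef]
      simp only [Function.comp_apply, hx]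
    have := AlternatingMap.map_perm (ExteriorAlgebra.ιMulti ℝ d (M := Fin n → ℝ))
      (fun k => bvec n (S.orderIsoOfFin hS k)) σe
    rw [hcomp] at this
    show (ExteriorAlgebra.ιMulti ℝ d) (fun k => bvec n (r k)) ∈ _
    rw [this]
    refine Submodule.smul_mem _ _ (Submodule.subset_span ⟨S, hS, rfl⟩)
  · have hz : (ExteriorAlgebra.ιMulti ℝ (M := Fin n → ℝ) d) (fun i => bvec n (r i)) = 0 := by
      refine AlternatingMap.map_eq_zero_of_not_injective _ _ ?_
      intro h
      exact hr fun a b hab => h (congrArg (bvec n) hab)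
    show (ExteriorAlgebra.ιMulti ℝ d) (fun i => bvec n (r i)) ∈ _
    rw [hz]
    exact Submodule.zero_mem _

def epsT (n : ℕ) (T : Finset (Fin n)) : Fin n → ℝ := fun i => if i ∈ T then -1 else 1

def diagT (n : ℕ) (T : Finset (Fin n)) : Matrix (Fin n) (Fin n) ℝ := Matrix.diagonal (epsT n T)

lemma prod_epsT (n : ℕ) (S T : Finset (Fin n)) :
    ∏ i ∈ S, epsT n T i = (-1 : ℝ) ^ (S ∩ T).card := by
  rw [show (∏ i ∈ S, epsT n T i) = ∏ i ∈ S, if i ∈ T then (-1:ℝ) else 1 from rfl,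
    ← Finset.prod_filter, Finset.filter_mem_eq_inter, Finset.prod_const]

lemma diag_act (n d : ℕ) (T S : Finset (Fin n)) (hS : S.card = d) :
    ExteriorAlgebra.map (Matrix.toLin' (diagT n T)) (eS n d S hS)
      = ((-1 : ℝ) ^ (S ∩ T).card) • eS n d S hS := by
  rw [eS, ExteriorAlgebra.map_apply_ιMulti]
  have hcomp : (Matrix.toLin' (diagT n T)) ∘ (fun k => bvec n (S.orderIsoOfFin hS k))
      = fun k => epsT n T (S.orderIsoOfFin hS k) • bvec n (S.orderIsoOfFin hS k) := by
    funext k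
    rw [Function.comp_apply, Matrix.toLin'_apply]
    funext j
    show (diagT n T).mulVec (bvec n (S.orderIsoOfFin hS k)) j = _
    rw [diagT, Matrix.mulVec_diagonal]
    show epsT n T j * bvec n (S.orderIsoOfFin hS k : Fin n) j
        = epsT n T (S.orderIsoOfFin hS k : Fin n) * bvec n (S.orderIsoOfFin hS k : Fin n) j
    unfold bvec
    rcases eq_or_ne ((S.orderIsoOfFin hS k : Fin n)) j with h | h
    · rw [h]
    · rw [if_neg h, mul_zero, mul_zero]
  rw [hcomp]
  rw [show ((ExteriorAlgebra.ιMulti ℝ d)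
        fun k => epsT n T (S.orderIsoOfFin hS k) • bvec n (S.orderIsoOfFin hS k))
      = (ExteriorAlgebra.ιMulti ℝ d).toMultilinearMap
        fun k => epsT n T (S.orderIsoOfFin hS k) • bvec n (S.orderIsoOfFin hS k) from rfl,
    MultilinearMap.map_smul_univ]
  congr 1
  rw [← prod_epsT n S T]
  exact (Fintype.prod_equiv (S.orderIsoOfFin hS).toEquiv
    (fun k => epsT n T ((S.orderIsoOfFin hS) k : Fin n)) (fun x => epsT n T x)
    (fun k => rfl)).trans (Finset.prod_coe_sort S (epsT n T))

lemma symmDiff_singleton_mem {α : Type*} [DecidableEq α] (X : Finset α) (a : α) (h : a ∈ X) :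
    X ∆ {a} = X.erase a := by
  ext x
  simp only [Finset.mem_symmDiff, Finset.mem_erase, Finset.mem_singleton]
  constructor
  · rintro (⟨h1, h2⟩ | ⟨rfl, h2⟩)
    · exact ⟨h2, h1⟩
    · exact absurd h h2
  · rintro ⟨h1, h2⟩
    exact Or.inl ⟨h2, h1⟩

lemma symmDiff_singleton_not_mem {α : Type*} [DecidableEq α] (X : Finset α) (a : α) (h : a ∉ X) :
    X ∆ {a} = insert a X := by
  ext x
  simp only [Finset.mem_symmDiff, Finset.mem_insert, Finset.mem_singleton]
  constructor
  · rintro (⟨h1, h2⟩ | ⟨rfl, h2⟩)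
    · exact Or.inr h1
    · exact Or.inl rfl
  · rintro (rfl | hx)
    · exact Or.inr ⟨rfl, h⟩
    · exact Or.inl ⟨hx, fun he => h (he ▸ hx)⟩

lemma pow_card_symmDiff_singleton {α : Type*} [DecidableEq α] (X : Finset α) (a : α) :
    ((-1 : ℝ)) ^ ((X ∆ {a}).card) = -((-1 : ℝ) ^ X.card) := by
  by_cases h : a ∈ X
  · rw [symmDiff_singleton_mem X a h, ← Finset.card_erase_add_one h, pow_succ]
    ring
  · rw [symmDiff_singleton_not_mem X a h, Finset.card_insert_of_notMem h, pow_succ]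
    ring

lemma even_card_symmDiff_singleton {α : Type*} [DecidableEq α] (X : Finset α) (a : α) :
    Even ((X ∆ {a}).card) ↔ ¬ Even X.card := by
  by_cases h : a ∈ X
  · rw [symmDiff_singleton_mem X a h, ← Finset.card_erase_add_one h, Nat.even_add_one, not_not]
  · rw [symmDiff_singleton_not_mem X a h, Finset.card_insert_of_notMem h, Nat.even_add_one]

lemma char_sum (n : ℕ) (S : Finset (Fin n)) (i j : Fin n) (hi : i ∈ S) (hj : j ∉ S) :
    ∑ T ∈ Finset.univ.filter (fun T : Finset (Fin n) => Even T.card),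
      ((-1 : ℝ)) ^ ((S ∩ T).card) = 0 := by
  have hij : i ≠ j := fun h => hj (h ▸ hi)
  refine Finset.sum_involution (fun T _ => (T ∆ {i}) ∆ {j}) ?_ ?_ ?_ ?_
  · intro T _
    have h1 : S ∩ ((T ∆ {i}) ∆ {j}) = (S ∩ T) ∆ {i} := by
      have hSi : S ⊓ ({i} : Finset (Fin n)) = {i} := by
        ext x; simp only [Finset.inf_eq_inter, Finset.mem_inter, Finset.mem_singleton]
        exact ⟨fun h => h.2, fun h => ⟨h ▸ hi, h⟩⟩
      have hSj : S ⊓ ({j} : Finset (Fin n)) = ⊥ := by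
        ext x; simp only [Finset.inf_eq_inter, Finset.mem_inter, Finset.mem_singleton,
          Finset.bot_eq_empty, Finset.notMem_empty, iff_false, not_and]
        rintro hx rfl; exact hj hx
      rw [← Finset.inf_eq_inter, inf_symmDiff_distrib_left, inf_symmDiff_distrib_left,
        hSi, hSj, symmDiff_bot, Finset.inf_eq_inter]
    rw [h1, pow_card_symmDiff_singleton]
    ring
  · intro T _ _ heq
    have heq' : (T ∆ {i}) ∆ {j} = T := heq
    have hmem : i ∈ (T ∆ {i}) ∆ {j} ↔ i ∈ T := by rw [heq']
    simp only [Finset.mem_symmDiff, Finset.mem_singleton, hij, hij.symm] at hmem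
    tauto
  · intro T hT
    simp only [Finset.mem_filter, Finset.mem_univ, true_and] at hT ⊢
    rw [even_card_symmDiff_singleton, even_card_symmDiff_singleton, not_not]
    exact hT
  · intro T _
    ext x
    simp only [Finset.mem_symmDiff, Finset.mem_singleton]
    tauto

lemma diag_mem (n : ℕ) (T : Finset (Fin n)) : diagT n T ∈ Matrix.orthogonalGroup (Fin n) ℝ := by
  rw [Matrix.mem_orthogonalGroup_iff]
  have hstar : star (diagT n T) = diagT n T := by
    rw [diagT, Matrix.star_eq_conjTranspose, Matrix.diagonal_conjTranspose]
    congr 1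
  rw [show (diagT n T).transpose = diagT n T from by rw [diagT, Matrix.diagonal_transpose],
    diagT, Matrix.diagonal_mul_diagonal]
  have hone : (fun i => epsT n T i * epsT n T i) = fun _ => (1 : ℝ) := by
    funext i
    by_cases h : i ∈ T <;> simp [epsT, h]
  rw [hone, Matrix.diagonal_one]

lemma diag_det (n : ℕ) (T : Finset (Fin n)) (hT : Even T.card) : (diagT n T).det = 1 := by
  rw [diagT, Matrix.det_diagonal]
  have : ∏ i : Fin n, epsT n T i = ∏ i ∈ Finset.univ, epsT n T i := rfl
  rw [this, prod_epsT, Finset.univ_inter]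
  exact hT.neg_one_pow

end

end Stmt10Aux

/-- Let `0 < d < n`. If `w ∈ ⋀^d(ℝ^n)` is fixed by `Λ^d(g)` for every
`g ∈ SO(n)` (orthogonal matrices of determinant one), then `w = 0`: the subspace of
`SO(n)`-invariant vectors in the `d`-th exterior power of `ℝ^n` is trivial for `0 < d < n`.
(Here `Λ^d(g)` is realized as the restriction to `⋀[ℝ]^d (Fin n → ℝ)` of the algebra map
`ExteriorAlgebra.map` induced by the linear map of `g`.) -/
theorem stmt_10 (n d : ℕ) (hd0 : 0 < d) (hdn : d < n)
    (w : ExteriorAlgebra ℝ (Fin n → ℝ)) (hw : w ∈ ⋀[ℝ]^d (Fin n → ℝ))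
    (hinv : ∀ g : Matrix (Fin n) (Fin n) ℝ, g ∈ Matrix.orthogonalGroup (Fin n) ℝ →
      g.det = 1 → ExteriorAlgebra.map (Matrix.toLin' g) w = w) :
    w = 0 := by
  classical
  have hspan : w ∈ Submodule.span ℝ (Stmt10Aux.genSet n d) := Stmt10Aux.span_le n d hw
  set evens : Finset (Finset (Fin n)) :=
    Finset.univ.filter (fun T : Finset (Fin n) => Even T.card) with hevens
  set Q : ExteriorAlgebra ℝ (Fin n → ℝ) →ₗ[ℝ] ExteriorAlgebra ℝ (Fin n → ℝ) :=
    ∑ T ∈ evens, (ExteriorAlgebra.map (Matrix.toLin' (Stmt10Aux.diagT n T))).toLinearMap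
    with hQ
  have hQw : Q w = evens.card • w := by
    rw [hQ, LinearMap.sum_apply]
    rw [Finset.sum_congr rfl (fun T hT => ?_), Finset.sum_const]
    show ExteriorAlgebra.map (Matrix.toLin' (Stmt10Aux.diagT n T)) w = w
    refine hinv _ (Stmt10Aux.diag_mem n T) (Stmt10Aux.diag_det n T ?_)
    rw [hevens] at hT
    simpa using hT
  have hQ0 : Q w = 0 := by
    have hker : Submodule.span ℝ (Stmt10Aux.genSet n d) ≤ LinearMap.ker Q := by
      rw [Submodule.span_le]
      rintro _ ⟨S, hS, rfl⟩
      have hi : ∃ i, i ∈ S := Finset.card_pos.1 (hS ▸ hd0)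
      obtain ⟨i, hi⟩ := hi
      have hj : ∃ j, j ∉ S := by
        by_contra h
        push_neg at h
        have : S = Finset.univ := Finset.eq_univ_iff_forall.2 h
        rw [this, Finset.card_univ, Fintype.card_fin] at hS
        omega
      obtain ⟨j, hj⟩ := hj
      simp only [SetLike.mem_coe, LinearMap.mem_ker]
      rw [hQ, LinearMap.sum_apply]
      have hterm : ∀ T ∈ evens,
          (ExteriorAlgebra.map (Matrix.toLin' (Stmt10Aux.diagT n T))).toLinearMap
            (Stmt10Aux.eS n d S hS)
          = ((-1 : ℝ) ^ ((S ∩ T).card)) • Stmt10Aux.eS n d S hS :=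
        fun T _ => Stmt10Aux.diag_act n d T S hS
      rw [Finset.sum_congr rfl hterm, ← Finset.sum_smul, hevens,
        Stmt10Aux.char_sum n S i j hi hj, zero_smul]
    exact hker hspan
  have hzero : (evens.card : ℕ) • w = 0 := hQw ▸ hQ0
  have hpos : 0 < evens.card := Finset.card_pos.2 ⟨∅, by simp [hevens]⟩
  rw [← Nat.cast_smul_eq_nsmul ℝ] at hzero
  rcases smul_eq_zero.mp hzero with h | h
  · exact absurd h (by exact_mod_cast hpos.ne')
  · exact h
end

section
/- Fix n ∈ ℕ and set r := ⌊n/2⌋. Define ρ_n(j) := π^{−2j} · C(2(n−j), n−j) for 0 ≤ j ≤ n, where C(a,b) is the binomial coefficient. Then the (r+1)×(r+1) real symmetric Hankel matrix whose (j_1, j_2) entry is ρ_n(j_1 + j_2), for 0 ≤ j_1, j_2 ≤ r, is positive definite. -/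
open Real intervalIntegral MeasureTheory Finset Matrix

lemma choose_prod (m : ℕ) :
    ((Nat.choose (2*m) m : ℝ)) = 4^m * ∏ i ∈ Finset.range m, (2*(i:ℝ)+1)/(2*i+2) := by
  induction m with
  | zero => simp
  | succ k ih =>
    have h := Nat.succ_mul_centralBinom_succ k
    have h2 : ((k:ℝ)+1) * (Nat.choose (2*(k+1)) (k+1) : ℝ)
        = 2 * (2*k+1) * (Nat.choose (2*k) k : ℝ) := by
      have := congrArg (Nat.cast (R := ℝ)) h
      push_cast [Nat.centralBinom] at this
      convert this using 3
    rw [ih] at h2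
    set P := ∏ i ∈ Finset.range k, (2*(i:ℝ)+1)/(2*i+2) with hP
    rw [Finset.prod_range_succ, ← hP, pow_succ]
    have hk : (2*(k:ℝ)+2) ≠ 0 := by positivity
    field_simp
    linear_combination 2 * h2

lemma sin_pow_int (m : ℕ) :
    (∫ θ in (0:ℝ)..π, (2 * Real.sin θ)^(2*m)) = π * (Nat.choose (2*m) m : ℝ) := by
  have h : ∀ θ : ℝ, (2 * Real.sin θ)^(2*m) = 4^m * Real.sin θ ^ (2*m) := by
    intro θ
    rw [mul_pow, pow_mul]
    norm_num
  simp_rw [h]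
  rw [intervalIntegral.integral_const_mul, integral_sin_pow_even, choose_prod]
  ring

/-- Fix `n ∈ ℕ` and set `r := ⌊n/2⌋`. With
`ρ_n(j) := π^(−2j) · C(2(n−j), n−j)`, the `(r+1)×(r+1)` real symmetric Hankel matrix with
entries `ρ_n(j₁ + j₂)` for `0 ≤ j₁, j₂ ≤ r` is positive definite. -/
theorem stmt_11 (n : ℕ) :
    Matrix.PosDef (Matrix.of fun j₁ j₂ : Fin (n / 2 + 1) =>
      Real.pi ^ (-(2 * ((j₁ : ℕ) + (j₂ : ℕ)) : ℤ)) *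
        ((Nat.choose (2 * (n - ((j₁ : ℕ) + (j₂ : ℕ)))) (n - ((j₁ : ℕ) + (j₂ : ℕ))) : ℝ))) := by
  rw [Matrix.posDef_iff_dotProduct_mulVec]
  constructor
  · -- Hermitian
    ext j₁ j₂
    simp only [Matrix.conjTranspose_apply, Matrix.of_apply, star_trivial, add_comm]
  · intro x hx
    have hstar : star x = x := funext fun i => star_trivial _
    rw [hstar]
    set G : Fin (n/2+1) → ℝ → ℝ :=
      fun j θ => (π:ℝ) ^ (-(2*(j:ℕ)):ℤ) * (2*Real.sin θ)^(2*(n/2 - (j:ℕ))) with hG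
    set H : ℝ → ℝ := fun θ => (2*Real.sin θ)^(2*(n - 2*(n/2))) with hH
    have hGcont : ∀ j, Continuous (G j) := by
      intro j
      rw [hG]
      fun_prop
    have hHcont : Continuous H := by rw [hH]; fun_prop
    -- the entry formula
    have entry : ∀ j₁ j₂ : Fin (n/2+1),
        (π:ℝ) ^ (-(2 * ((j₁:ℕ) + (j₂:ℕ)) : ℤ)) *
          ((Nat.choose (2 * (n - ((j₁:ℕ) + (j₂:ℕ)))) (n - ((j₁:ℕ) + (j₂:ℕ))) : ℝ))
        = (1/π) * ∫ θ in (0:ℝ)..π, G j₁ θ * (H θ * G j₂ θ) := by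
      intro j₁ j₂
      have hb₁ : (j₁:ℕ) ≤ n/2 := Nat.lt_succ_iff.mp j₁.isLt
      have hb₂ : (j₂:ℕ) ≤ n/2 := Nat.lt_succ_iff.mp j₂.isLt
      have e1 : ∀ θ : ℝ, G j₁ θ * (H θ * G j₂ θ)
          = (π:ℝ) ^ (-(2*((j₁:ℕ)+(j₂:ℕ))):ℤ) *
              (2*Real.sin θ)^(2*(n - ((j₁:ℕ)+(j₂:ℕ)))) := by
        intro θ
        have hz : (π:ℝ) ^ (-(2*(j₁:ℕ)):ℤ) * (π:ℝ) ^ (-(2*(j₂:ℕ)):ℤ)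
            = (π:ℝ) ^ (-(2*((j₁:ℕ)+(j₂:ℕ))):ℤ) := by
          rw [← zpow_add₀ pi_ne_zero]
          congr 1
          ring
        have hp : (2*Real.sin θ)^(2*(n/2 - (j₁:ℕ))) *
            ((2*Real.sin θ)^(2*(n - 2*(n/2))) * (2*Real.sin θ)^(2*(n/2 - (j₂:ℕ))))
            = (2*Real.sin θ)^(2*(n - ((j₁:ℕ)+(j₂:ℕ)))) := by
          rw [← pow_add, ← pow_add]
          congr 1
          omega
        calc G j₁ θ * (H θ * G j₂ θ)
            = ((π:ℝ) ^ (-(2*(j₁:ℕ)):ℤ) * (π:ℝ) ^ (-(2*(j₂:ℕ)):ℤ)) *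
              ((2*Real.sin θ)^(2*(n/2 - (j₁:ℕ))) *
                ((2*Real.sin θ)^(2*(n - 2*(n/2))) * (2*Real.sin θ)^(2*(n/2 - (j₂:ℕ))))) := by
              rw [hG, hH]; ring
          _ = _ := by rw [hz, hp]
      simp_rw [e1]
      rw [intervalIntegral.integral_const_mul, sin_pow_int]
      have : (π:ℝ) ≠ 0 := pi_ne_zero
      field_simp
    -- the quadratic form
    have point : ∀ θ : ℝ, ∑ j₁ : Fin (n/2+1), ∑ j₂ : Fin (n/2+1),
        x j₁ * (G j₁ θ * (H θ * G j₂ θ)) * x j₂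
        = H θ * (∑ j, x j * G j θ)^2 := by
      intro θ
      rw [sq, Finset.sum_mul_sum, Finset.mul_sum]
      refine Finset.sum_congr rfl fun j₁ _ => ?_
      rw [Finset.mul_sum]
      refine Finset.sum_congr rfl fun j₂ _ => ?_
      ring
    have qf : dotProduct x
        ((Matrix.of fun j₁ j₂ : Fin (n / 2 + 1) =>
          Real.pi ^ (-(2 * ((j₁ : ℕ) + (j₂ : ℕ)) : ℤ)) *
            ((Nat.choose (2 * (n - ((j₁ : ℕ) + (j₂ : ℕ)))) (n - ((j₁ : ℕ) + (j₂ : ℕ))) : ℝ)))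
            *ᵥ x)
        = (1/π) * ∫ θ in (0:ℝ)..π, H θ * (∑ j, x j * G j θ)^2 := by
      simp only [dotProduct, Matrix.mulVec, Matrix.of_apply]
      simp_rw [entry]
      have swap : ∀ j₁ : Fin (n/2+1), ∀ j₂ : Fin (n/2+1),
          x j₁ * ((1/π) * (∫ θ in (0:ℝ)..π, G j₁ θ * (H θ * G j₂ θ)) * x j₂)
          = (1/π) * ∫ θ in (0:ℝ)..π, x j₁ * (G j₁ θ * (H θ * G j₂ θ)) * x j₂ := by
        intro j₁ j₂
        calc x j₁ * ((1/π) * (∫ θ in (0:ℝ)..π, G j₁ θ * (H θ * G j₂ θ)) * x j₂)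
            = (1/π) * ((x j₁ * x j₂) * ∫ θ in (0:ℝ)..π, G j₁ θ * (H θ * G j₂ θ)) := by ring
          _ = (1/π) * ∫ θ in (0:ℝ)..π, (x j₁ * x j₂) * (G j₁ θ * (H θ * G j₂ θ)) := by
              rw [intervalIntegral.integral_const_mul]
          _ = (1/π) * ∫ θ in (0:ℝ)..π, x j₁ * (G j₁ θ * (H θ * G j₂ θ)) * x j₂ := by
              congr 1
              exact intervalIntegral.integral_congr fun θ _ => by ring
      calc (∑ j₁, x j₁ * ∑ j₂, ((1/π) * ∫ θ in (0:ℝ)..π, G j₁ θ * (H θ * G j₂ θ)) * x j₂)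
          = ∑ j₁, ∑ j₂, (1/π) * ∫ θ in (0:ℝ)..π,
              x j₁ * (G j₁ θ * (H θ * G j₂ θ)) * x j₂ := by
            refine Finset.sum_congr rfl fun j₁ _ => ?_
            rw [Finset.mul_sum]
            exact Finset.sum_congr rfl fun j₂ _ => swap j₁ j₂
        _ = (1/π) * ∑ j₁, ∑ j₂, ∫ θ in (0:ℝ)..π,
              x j₁ * (G j₁ θ * (H θ * G j₂ θ)) * x j₂ := by
            rw [Finset.mul_sum]
            refine Finset.sum_congr rfl fun j₁ _ => ?_
            rw [Finset.mul_sum]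
        _ = (1/π) * ∫ θ in (0:ℝ)..π, ∑ j₁, ∑ j₂,
              x j₁ * (G j₁ θ * (H θ * G j₂ θ)) * x j₂ := by
            congr 1
            have step1 : ∀ j₁ : Fin (n/2+1),
                (∑ j₂ : Fin (n/2+1), ∫ θ in (0:ℝ)..π, x j₁ * (G j₁ θ * (H θ * G j₂ θ)) * x j₂)
                = ∫ θ in (0:ℝ)..π, ∑ j₂ : Fin (n/2+1), x j₁ * (G j₁ θ * (H θ * G j₂ θ)) * x j₂ :=
              fun j₁ => (intervalIntegral.integral_finset_sum
                (fun j₂ _ => Continuous.intervalIntegrable (by fun_prop) _ _)).symm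
            calc (∑ j₁ : Fin (n/2+1), ∑ j₂ : Fin (n/2+1),
                  ∫ θ in (0:ℝ)..π, x j₁ * (G j₁ θ * (H θ * G j₂ θ)) * x j₂)
                = ∑ j₁ : Fin (n/2+1), ∫ θ in (0:ℝ)..π,
                    ∑ j₂ : Fin (n/2+1), x j₁ * (G j₁ θ * (H θ * G j₂ θ)) * x j₂ :=
                  Finset.sum_congr rfl fun j₁ _ => step1 j₁
              _ = ∫ θ in (0:ℝ)..π, ∑ j₁ : Fin (n/2+1),
                    ∑ j₂ : Fin (n/2+1), x j₁ * (G j₁ θ * (H θ * G j₂ θ)) * x j₂ :=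
                  (intervalIntegral.integral_finset_sum fun j₁ _ =>
                    Continuous.intervalIntegrable
                      (continuous_finset_sum _ fun j₂ _ => by fun_prop) _ _).symm
        _ = (1/π) * ∫ θ in (0:ℝ)..π, H θ * (∑ j, x j * G j θ)^2 := by
            congr 1
            exact intervalIntegral.integral_congr fun θ _ => point θ
    rw [qf]
    set F : ℝ → ℝ := fun θ => H θ * (∑ j, x j * G j θ)^2 with hF
    -- the polynomial whose values are the quadratic-form weights
    set P : Polynomial ℝ :=
      ∑ j : Fin (n/2+1), Polynomial.monomial (n/2 - (j:ℕ)) (x j * (π:ℝ) ^ (-(2*(j:ℕ)):ℤ))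
      with hPdef
    have evalq : ∀ θ : ℝ, (∑ j, x j * G j θ) = P.eval ((2*Real.sin θ)^2) := by
      intro θ
      rw [hPdef, Polynomial.eval_finset_sum]
      refine Finset.sum_congr rfl fun j _ => ?_
      rw [Polynomial.eval_monomial, hG, ← pow_mul]
      ring
    have hP : P ≠ 0 := by
      have hex : ∃ j₀, x j₀ ≠ 0 := by
        by_contra h
        push_neg at h
        exact hx (funext fun j => by simpa using h j)
      obtain ⟨j₀, hj₀⟩ := hex
      intro h
      have hc := congrArg (fun p => Polynomial.coeff p (n/2 - (j₀:ℕ))) h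
      simp only [hPdef, Polynomial.finset_sum_coeff, Polynomial.coeff_monomial,
        Polynomial.coeff_zero] at hc
      rw [Finset.sum_eq_single j₀] at hc
      · simp at hc
        rcases hc with hc | hc
        · exact hj₀ hc
        · exact pow_ne_zero _ pi_ne_zero hc
      · intro j _ hjne
        have h1 : (j:ℕ) ≤ n/2 := Nat.lt_succ_iff.mp j.isLt
        have h2 : (j₀:ℕ) ≤ n/2 := Nat.lt_succ_iff.mp j₀.isLt
        have h3 : (j:ℕ) ≠ (j₀:ℕ) := fun hh => hjne (Fin.ext hh)
        rw [if_neg (by omega)]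
      · simp
    have hfin : Set.Finite {u : ℝ | P.IsRoot u} := Polynomial.finite_setOf_isRoot hP
    have hpi : (0:ℝ) < π := pi_pos
    have hinj : Set.InjOn (fun θ : ℝ => (2*Real.sin θ)^2) (Set.Ioo 0 (π/2)) := by
      intro a ha b hb hab
      simp only at hab
      have ha1 : 0 < Real.sin a := Real.sin_pos_of_pos_of_lt_pi ha.1 (by linarith [ha.2])
      have hb1 : 0 < Real.sin b := Real.sin_pos_of_pos_of_lt_pi hb.1 (by linarith [hb.2])
      have hs : Real.sin a = Real.sin b := by nlinarith
      exact Real.injOn_sin ⟨by linarith [ha.1], le_of_lt ha.2⟩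
        ⟨by linarith [hb.1], le_of_lt hb.2⟩ hs
    have hinf : Set.Infinite (Set.Ioo (0:ℝ) (π/2)) := Set.Ioo_infinite (by linarith)
    have hexists : ∃ θ₀ ∈ Set.Ioo (0:ℝ) (π/2), P.eval ((2*Real.sin θ₀)^2) ≠ 0 := by
      by_contra hcon
      push_neg at hcon
      have hsub : (fun θ : ℝ => (2*Real.sin θ)^2) '' (Set.Ioo 0 (π/2)) ⊆ {u | P.IsRoot u} := by
        rintro u ⟨θ, hθ, rfl⟩
        exact hcon θ hθ
      exact Set.not_infinite.mpr (hfin.subset hsub) (hinf.image hinj)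
    obtain ⟨θ₀, hθ₀, hq₀⟩ := hexists
    have hFcont : Continuous F := by
      rw [hF]
      exact hHcont.mul ((continuous_finset_sum _ fun j _ =>
        (continuous_const.mul (hGcont j))).pow 2)
    have hFnonneg : ∀ θ, 0 ≤ F θ := by
      intro θ
      rw [hF]
      have hHn : 0 ≤ H θ := by
        rw [hH]
        simp only
        rw [pow_mul]
        positivity
      exact mul_nonneg hHn (sq_nonneg _)
    have hF₀ : 0 < F θ₀ := by
      rw [hF]
      have hs0 : 0 < Real.sin θ₀ := Real.sin_pos_of_pos_of_lt_pi hθ₀.1 (by linarith [hθ₀.2])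
      have hH0 : 0 < H θ₀ := by
        rw [hH]
        simp only
        positivity
      have hq0 : (∑ j, x j * G j θ₀) ≠ 0 := by
        rw [evalq]
        exact hq₀
      exact mul_pos hH0 (pow_two_pos_of_ne_zero hq0)
    have hUopen : IsOpen ({θ : ℝ | F θ ≠ 0} ∩ Set.Ioo 0 π) := by
      refine IsOpen.inter ?_ isOpen_Ioo
      have : {θ : ℝ | F θ ≠ 0} = F ⁻¹' ({0}ᶜ) := rfl
      rw [this]
      exact isOpen_compl_singleton.preimage hFcont
    have hθ₀U : θ₀ ∈ {θ : ℝ | F θ ≠ 0} ∩ Set.Ioo 0 π :=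
      ⟨ne_of_gt hF₀, hθ₀.1, by linarith [hθ₀.2]⟩
    obtain ⟨ε, hε, hball⟩ := Metric.isOpen_iff.mp hUopen θ₀ hθ₀U
    have hsup : Metric.ball θ₀ ε ⊆ Function.support F ∩ Set.Ioc 0 π := by
      intro y hy
      exact ⟨(hball hy).1, Set.Ioo_subset_Ioc_self (hball hy).2⟩
    have hmeas : 0 < volume (Function.support F ∩ Set.Ioc (0:ℝ) π) := by
      refine lt_of_lt_of_le ?_ (measure_mono hsup)
      rw [Real.volume_ball]
      exact ENNReal.ofReal_pos.2 (by linarith)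
    have hint : 0 < ∫ θ in (0:ℝ)..π, F θ :=
      (intervalIntegral.integral_pos_iff_support_of_nonneg_ae'
        (ae_of_all _ fun θ => hFnonneg θ) (hFcont.intervalIntegrable _ _)).2 ⟨hpi, hmeas⟩
    exact mul_pos (by positivity) hint
end

section
/- For every m ∈ ℕ, the (m+1)×(m+1) Hankel matrix whose (i, j) entry is the central binomial coefficient C(2(i+j), i+j), for 0 ≤ i, j ≤ m, is positive definite; equivalently, for every nonzero real vector (ζ_0, …, ζ_m), one has Σ_{i,j=0}^{m} C(2(i+j), i+j) · ζ_i · ζ_j > 0. -/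
open Finset in
private lemma stmt12_cb_zero {i s : ℕ} (h : i < s) : (2*i).choose (i+s) = 0 :=
  Nat.choose_eq_zero_of_lt (by omega)

open Finset in
private lemma stmt12_key (m i j : ℕ) (hi : i ≤ m) (hj : j ≤ m) :
    (2 * (i + j)).choose (i + j) =
      ∑ s ∈ range (m + 1),
        (if s = 0 then 1 else 2) * ((2*i).choose (i+s) * (2*j).choose (j+s)) := by
  have h0 : (2*(i+j)).choose (i+j)
      = ∑ a ∈ range (i + (j+1)), (2*i).choose a * (2*j).choose (i+j-a) := by
    rw [show 2*(i+j) = 2*i + 2*j by ring, Nat.add_choose_eq,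
      Finset.Nat.sum_antidiagonal_eq_sum_range_succ_mk]
    norm_num [Nat.succ_eq_add_one]
    rw [show i + (j + 1) = i + j + 1 from by omega]
  rw [h0, Finset.sum_range_add]
  have h1 : ∑ a ∈ range i, (2*i).choose a * (2*j).choose (i+j-a)
      = ∑ a ∈ range i, (2*i).choose (i+(a+1)) * (2*j).choose (j+(a+1)) := by
    rw [← Finset.sum_range_reflect]
    apply Finset.sum_congr rfl
    intro a ha
    simp only [mem_range] at ha
    have e1 : i + j - (i - 1 - a) = j + (a+1) := by omega
    have e2 : (2*i).choose (i-1-a) = (2*i).choose (i+(a+1)) := by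
      rw [← Nat.choose_symm (show i+(a+1) ≤ 2*i by omega)]
      congr 1; omega
    rw [e1, e2]
  have h2 : ∑ k ∈ range (j+1), (2*i).choose (i+k) * (2*j).choose (i+j-(i+k))
      = ∑ k ∈ range (j+1), (2*i).choose (i+k) * (2*j).choose (j+k) := by
    apply Finset.sum_congr rfl
    intro k hk
    simp only [mem_range] at hk
    have e1 : i + j - (i+k) = j - k := by omega
    have e2 : (2*j).choose (j-k) = (2*j).choose (j+k) := by
      rw [← Nat.choose_symm (show j+k ≤ 2*j by omega)]
      congr 1; omega
    rw [e1, e2]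
  rw [h1, h2]
  have ext1 : ∑ a ∈ range i, (2*i).choose (i+(a+1)) * (2*j).choose (j+(a+1))
      = ∑ a ∈ range m, (2*i).choose (i+(a+1)) * (2*j).choose (j+(a+1)) := by
    apply Finset.sum_subset (Finset.range_subset_range.2 hi)
    intro a _ ha
    simp only [mem_range, not_lt] at ha
    rw [stmt12_cb_zero (by omega)]
    ring
  have ext2 : ∑ k ∈ range (j+1), (2*i).choose (i+k) * (2*j).choose (j+k)
      = ∑ k ∈ range (m+1), (2*i).choose (i+k) * (2*j).choose (j+k) := by
    apply Finset.sum_subset (Finset.range_subset_range.2 (by omega))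
    intro k _ hk
    simp only [mem_range, not_lt] at hk
    rw [show (2*j).choose (j+k) = 0 from stmt12_cb_zero (by omega)]
    ring
  rw [ext1, ext2]
  have shift : ∑ a ∈ range m, (2*i).choose (i+(a+1)) * (2*j).choose (j+(a+1))
      = ∑ s ∈ range (m+1), (if s = 0 then 0 else (2*i).choose (i+s) * (2*j).choose (j+s)) := by
    rw [Finset.sum_range_succ'
      (fun s => if s = 0 then 0 else (2*i).choose (i+s) * (2*j).choose (j+s)) m]
    simp
  rw [shift, ← Finset.sum_add_distrib]
  apply Finset.sum_congr rfl
  intro s _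
  split_ifs <;> ring

open Finset in
private lemma stmt12_quad (m : ℕ) (ζ : Fin (m+1) → ℝ) :
    ∑ i : Fin (m+1), ∑ j : Fin (m+1),
        (((2 * ((i : ℕ) + (j : ℕ))).choose ((i : ℕ) + (j : ℕ)) : ℝ)) * ζ i * ζ j
    = ∑ s ∈ range (m+1), (if s = 0 then (1:ℝ) else 2) *
        (∑ i : Fin (m+1), (((2*(i:ℕ)).choose ((i:ℕ)+s) : ℝ)) * ζ i)^2 := by
  have expand : ∀ i j : Fin (m+1),
      (((2 * ((i:ℕ) + (j:ℕ))).choose ((i:ℕ) + (j:ℕ)) : ℝ))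
      = ∑ s ∈ range (m+1), (if s = 0 then (1:ℝ) else 2) *
          (((2*(i:ℕ)).choose ((i:ℕ)+s) : ℝ) * ((2*(j:ℕ)).choose ((j:ℕ)+s) : ℝ)) := by
    intro i j
    have h := stmt12_key m i j (Nat.lt_succ_iff.1 i.2) (Nat.lt_succ_iff.1 j.2)
    have h2 := congrArg (fun n : ℕ => (n : ℝ)) h
    push_cast at h2
    exact h2
  calc ∑ i : Fin (m+1), ∑ j : Fin (m+1),
        (((2 * ((i : ℕ) + (j : ℕ))).choose ((i : ℕ) + (j : ℕ)) : ℝ)) * ζ i * ζ j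
      = ∑ i : Fin (m+1), ∑ j : Fin (m+1), ∑ s ∈ range (m+1),
          (if s = 0 then (1:ℝ) else 2) *
          ((((2*(i:ℕ)).choose ((i:ℕ)+s) : ℝ)) * ζ i) *
          ((((2*(j:ℕ)).choose ((j:ℕ)+s) : ℝ)) * ζ j) := by
        apply Finset.sum_congr rfl; intro i _
        apply Finset.sum_congr rfl; intro j _
        rw [expand i j, Finset.sum_mul, Finset.sum_mul]
        apply Finset.sum_congr rfl; intro s _
        ring
    _ = ∑ s ∈ range (m+1), ∑ i : Fin (m+1), ∑ j : Fin (m+1),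
          (if s = 0 then (1:ℝ) else 2) *
          ((((2*(i:ℕ)).choose ((i:ℕ)+s) : ℝ)) * ζ i) *
          ((((2*(j:ℕ)).choose ((j:ℕ)+s) : ℝ)) * ζ j) := by
        rw [show (∑ i : Fin (m+1), ∑ j : Fin (m+1), ∑ s ∈ range (m+1),
          (if s = 0 then (1:ℝ) else 2) *
          ((((2*(i:ℕ)).choose ((i:ℕ)+s) : ℝ)) * ζ i) *
          ((((2*(j:ℕ)).choose ((j:ℕ)+s) : ℝ)) * ζ j))
          = ∑ i : Fin (m+1), ∑ s ∈ range (m+1), ∑ j : Fin (m+1),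
          (if s = 0 then (1:ℝ) else 2) *
          ((((2*(i:ℕ)).choose ((i:ℕ)+s) : ℝ)) * ζ i) *
          ((((2*(j:ℕ)).choose ((j:ℕ)+s) : ℝ)) * ζ j)
          from Finset.sum_congr rfl fun i _ => Finset.sum_comm]
        exact Finset.sum_comm
    _ = ∑ s ∈ range (m+1), (if s = 0 then (1:ℝ) else 2) *
        (∑ i : Fin (m+1), (((2*(i:ℕ)).choose ((i:ℕ)+s) : ℝ)) * ζ i)^2 := by
        apply Finset.sum_congr rfl; intro s _
        rw [sq, Finset.sum_mul_sum, Finset.mul_sum]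
        apply Finset.sum_congr rfl; intro i _
        rw [Finset.mul_sum]
        apply Finset.sum_congr rfl; intro j _
        ring

open Finset in
private lemma stmt12_posq (m : ℕ) (ζ : Fin (m+1) → ℝ) (hz : ζ ≠ 0) :
    0 < ∑ s ∈ range (m+1), (if s = 0 then (1:ℝ) else 2) *
        (∑ i : Fin (m+1), (((2*(i:ℕ)).choose ((i:ℕ)+s) : ℝ)) * ζ i)^2 := by
  have hsupp : (Finset.univ.filter (fun i : Fin (m+1) => ζ i ≠ 0)).Nonempty := by
    rcases Function.ne_iff.1 hz with ⟨i, hi⟩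
    exact ⟨i, by simp; simpa using hi⟩
  have hi0mem : ζ ((Finset.univ.filter (fun i : Fin (m+1) => ζ i ≠ 0)).max' hsupp) ≠ 0 := by
    have h := Finset.max'_mem _ hsupp
    simp only [Finset.mem_filter] at h
    exact h.2
  set i0 : Fin (m+1) := (Finset.univ.filter (fun i : Fin (m+1) => ζ i ≠ 0)).max' hsupp
  have hmax : ∀ i : Fin (m+1), i0 < i → ζ i = 0 := by
    intro i hi
    by_contra h
    exact absurd (Finset.le_max' _ i (by simp [h])) (not_le.2 hi)
  have hinner : ∑ i : Fin (m+1), (((2*(i:ℕ)).choose ((i:ℕ)+(i0:ℕ)) : ℝ)) * ζ i = ζ i0 := by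
    rw [Finset.sum_eq_single_of_mem i0 (Finset.mem_univ _)]
    · simp [Nat.two_mul, Nat.choose_self]
    · intro b _ hb
      rcases lt_or_gt_of_ne hb with h | h
      · have : (2*(b:ℕ)).choose ((b:ℕ)+(i0:ℕ)) = 0 :=
          Nat.choose_eq_zero_of_lt (by have := Fin.lt_iff_val_lt_val.1 h; omega)
        simp [this]
      · simp [hmax b h]
  apply Finset.sum_pos'
  · intro s _
    positivity
  · refine ⟨(i0 : ℕ), Finset.mem_range.2 i0.2, ?_⟩
    rw [hinner]
    have h2 : (0:ℝ) < (ζ i0)^2 := by positivity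
    split_ifs <;> nlinarith

/-- For every `m ∈ ℕ`, the `(m+1)×(m+1)` Hankel matrix whose `(i, j)` entry is
the central binomial coefficient `C(2(i+j), i+j)` is positive definite; equivalently, for every
nonzero real vector `(ζ_0, …, ζ_m)` one has `∑_{i,j} C(2(i+j), i+j) ζ_i ζ_j > 0`. -/
theorem stmt_12 (m : ℕ) :
    Matrix.PosDef (Matrix.of fun i j : Fin (m + 1) =>
        (((2 * ((i : ℕ) + (j : ℕ))).choose ((i : ℕ) + (j : ℕ)) : ℝ))) ∧
    ∀ ζ : Fin (m + 1) → ℝ, ζ ≠ 0 →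
      0 < ∑ i : Fin (m + 1), ∑ j : Fin (m + 1),
        (((2 * ((i : ℕ) + (j : ℕ))).choose ((i : ℕ) + (j : ℕ)) : ℝ)) * ζ i * ζ j := by
  have hpos : ∀ ζ : Fin (m + 1) → ℝ, ζ ≠ 0 →
      0 < ∑ i : Fin (m + 1), ∑ j : Fin (m + 1),
        (((2 * ((i : ℕ) + (j : ℕ))).choose ((i : ℕ) + (j : ℕ)) : ℝ)) * ζ i * ζ j := by
    intro ζ hz
    rw [stmt12_quad m ζ]
    exact stmt12_posq m ζ hz
  refine ⟨Matrix.posDef_iff_dotProduct_mulVec.mpr ⟨?_, ?_⟩, hpos⟩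
  · ext i j
    simp only [Matrix.conjTranspose_apply, Matrix.of_apply, star_trivial]
    rw [Nat.add_comm (j:ℕ) (i:ℕ)]
  · intro x hx
    have h := hpos x hx
    have hform : dotProduct (star x) (Matrix.mulVec (Matrix.of fun i j : Fin (m + 1) =>
        (((2 * ((i : ℕ) + (j : ℕ))).choose ((i : ℕ) + (j : ℕ)) : ℝ))) x)
        = ∑ i : Fin (m + 1), ∑ j : Fin (m + 1),
        (((2 * ((i : ℕ) + (j : ℕ))).choose ((i : ℕ) + (j : ℕ)) : ℝ)) * x i * x j := by
      simp only [dotProduct, Matrix.mulVec, Matrix.of_apply, star_trivial, Pi.star_apply]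
      apply Finset.sum_congr rfl; intro i _
      rw [Finset.mul_sum]
      apply Finset.sum_congr rfl; intro j _
      ring
    rw [hform]
    exact h
end

section
/- For every natural number n, ∫_0^4 x^n · π^{−1} · (x(4−x))^{−1/2} dx = C(2n, n), the central binomial coefficient. In particular (taking n = 0), the function p(x) := π^{−1}(x(4−x))^{−1/2} is a probability density on the interval (0, 4). -/
open MeasureTheory Real Set

lemma prod_eq_choose (n : ℕ) :
    ∏ i ∈ Finset.range n, ((2 * (i : ℝ) + 1) / (2 * i + 2)) = ((2 * n).choose n : ℝ) / 4 ^ n := by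
  induction n with
  | zero => simp
  | succ k ih =>
    rw [Finset.prod_range_succ, ih]
    have h := Nat.succ_mul_centralBinom_succ k
    have h' : ((k : ℝ) + 1) * ((2 * (k + 1)).choose (k + 1) : ℝ)
        = 2 * (2 * k + 1) * ((2 * k).choose k : ℝ) := by
      rw [Nat.centralBinom] at h
      exact_mod_cast congrArg (Nat.cast : ℕ → ℝ) h
    have hk1 : ((k : ℝ) + 1) ≠ 0 := by positivity
    field_simp
    linear_combination (-2 * (4:ℝ) ^ k) * h'

lemma sq_rpow_neg_half {c : ℝ} (hc : 0 < c) : ((c ^ 2 : ℝ)) ^ (-(1 : ℝ) / 2) = c⁻¹ := by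
  rw [← Real.rpow_natCast c 2, ← Real.rpow_mul hc.le]
  norm_num
  exact Real.rpow_neg_one c

/-- For every natural number `n`,
`∫_0^4 x^n · π⁻¹ · (x(4−x))^(−1/2) dx = C(2n, n)`, the central binomial coefficient.
(Taking `n = 0` shows that `p(x) = π⁻¹ (x(4−x))^(−1/2)` is a probability density on `(0,4)`.) -/
theorem stmt_13 (n : ℕ) :
    ∫ x in Set.Ioo (0 : ℝ) 4, x ^ n * Real.pi⁻¹ * (x * (4 - x)) ^ (-(1 : ℝ) / 2)
      = ((2 * n).choose n : ℝ) := by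
  set g : ℝ → ℝ := fun x => x ^ n * Real.pi⁻¹ * (x * (4 - x)) ^ (-(1 : ℝ) / 2) with hg
  set f : ℝ → ℝ := fun u => 4 * Real.sin u ^ 2 with hf
  have himg : f '' Set.Ioo 0 (π / 2) = Set.Ioo (0 : ℝ) 4 := by
    ext x
    constructor
    · rintro ⟨u, ⟨hu0, hu2⟩, rfl⟩
      have hs0 : 0 < Real.sin u := Real.sin_pos_of_pos_of_lt_pi hu0 (lt_trans hu2 (by linarith [pi_pos]))
      have hs1 : Real.sin u < 1 := by
        have := Real.strictMonoOn_sin (a := u) (b := π / 2)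
          ⟨by linarith [pi_pos], by linarith⟩ ⟨by linarith [pi_pos], le_refl _⟩ hu2
        simpa using this
      constructor
      · simp only [hf]; positivity
      · simp only [hf]; nlinarith
    · rintro ⟨hx0, hx4⟩
      refine ⟨Real.arcsin (Real.sqrt x / 2), ⟨?_, ?_⟩, ?_⟩
      · apply Real.arcsin_pos.2; positivity
      · apply Real.arcsin_lt_pi_div_two.2
        rw [div_lt_one (by norm_num)]
        have : Real.sqrt x < Real.sqrt 4 := Real.sqrt_lt_sqrt hx0.le hx4
        simpa [show Real.sqrt 4 = 2 by
          rw [show (4 : ℝ) = 2 ^ 2 by norm_num, Real.sqrt_sq (by norm_num)]] using this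
      · have hb : Real.sqrt x / 2 ≤ 1 := by
          rw [div_le_one (by norm_num)]
          have : Real.sqrt x ≤ Real.sqrt 4 := Real.sqrt_le_sqrt hx4.le
          simpa [show Real.sqrt 4 = 2 by
            rw [show (4 : ℝ) = 2 ^ 2 by norm_num, Real.sqrt_sq (by norm_num)]] using this
        have ha : -1 ≤ Real.sqrt x / 2 := by
          have := Real.sqrt_nonneg x; linarith
        simp only [hf, Real.sin_arcsin ha hb]
        rw [div_pow, Real.sq_sqrt hx0.le]
        ring
  have hderiv : ∀ u ∈ Set.Ioo (0 : ℝ) (π / 2),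
      HasDerivWithinAt f (8 * Real.sin u * Real.cos u) (Set.Ioo 0 (π / 2)) u := by
    intro u _
    have : HasDerivAt f (4 * (2 * Real.sin u ^ 1 * Real.cos u)) u :=
      ((Real.hasDerivAt_sin u).pow 2).const_mul 4
    rw [show 8 * Real.sin u * Real.cos u = 4 * (2 * Real.sin u ^ 1 * Real.cos u) by ring]
    exact this.hasDerivWithinAt
  have hinj : Set.InjOn f (Set.Ioo 0 (π / 2)) := by
    have hmono : StrictMonoOn f (Set.Ioo 0 (π / 2)) := by
      intro a ha b hb hab
      have hsa : 0 < Real.sin a := Real.sin_pos_of_pos_of_lt_pi ha.1 (lt_trans ha.2 (by linarith [pi_pos]))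
      have : Real.sin a < Real.sin b := by
        apply Real.strictMonoOn_sin ⟨by linarith [ha.1, pi_pos], by linarith [ha.2]⟩
          ⟨by linarith [hb.1, pi_pos], hb.2.le⟩ hab
      simp only [hf]
      nlinarith
    exact hmono.injOn
  rw [← himg, integral_image_eq_integral_abs_deriv_smul measurableSet_Ioo hderiv hinj g]
  have hcong : ∀ u ∈ Set.Ioo (0 : ℝ) (π / 2),
      |8 * Real.sin u * Real.cos u| • g (f u) = (2 * 4 ^ n / π) * Real.sin u ^ (2 * n) := by
    intro u ⟨hu0, hu2⟩
    have hs : 0 < Real.sin u := Real.sin_pos_of_pos_of_lt_pi hu0 (lt_trans hu2 (by linarith [pi_pos]))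
    have hc : 0 < Real.cos u := Real.cos_pos_of_mem_Ioo ⟨by linarith [pi_pos], hu2⟩
    have hfu : f u * (4 - f u) = (4 * Real.sin u * Real.cos u) ^ 2 := by
      simp only [hf]
      have := Real.sin_sq_add_cos_sq u
      nlinarith
    simp only [smul_eq_mul, hg, hfu]
    rw [sq_rpow_neg_half (by positivity), abs_of_pos (by positivity)]
    simp only [hf]
    rw [mul_pow, pow_mul]
    have hπ : (π : ℝ) ≠ 0 := Real.pi_ne_zero
    field_simp
    ring
  rw [setIntegral_congr_fun measurableSet_Ioo hcong]
  rw [← MeasureTheory.integral_Ioc_eq_integral_Ioo, ← intervalIntegral.integral_of_le (by positivity)]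
  rw [intervalIntegral.integral_const_mul]
  have hhalf : ∫ x in (0 : ℝ)..(π / 2), Real.sin x ^ (2 * n)
      = (1 / 2) * ∫ x in (0 : ℝ)..π, Real.sin x ^ (2 * n) := by
    have hsplit : ∫ x in (0 : ℝ)..π, Real.sin x ^ (2 * n)
        = (∫ x in (0 : ℝ)..(π / 2), Real.sin x ^ (2 * n))
          + ∫ x in (π / 2 : ℝ)..π, Real.sin x ^ (2 * n) := by
      rw [intervalIntegral.integral_add_adjacent_intervals] <;>
        exact (Continuous.intervalIntegrable (by fun_prop) _ _)
    have hsym : ∫ x in (π / 2 : ℝ)..π, Real.sin x ^ (2 * n)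
        = ∫ x in (0 : ℝ)..(π / 2), Real.sin x ^ (2 * n) := by
      have := intervalIntegral.integral_comp_sub_left (a := 0) (b := π / 2)
        (fun x => Real.sin x ^ (2 * n)) π
      simp only [sub_zero] at this
      rw [show π - π / 2 = π / 2 by ring] at this
      rw [← this]
      apply intervalIntegral.integral_congr
      intro x _
      simp [Real.sin_pi_sub]
    linarith [hsplit, hsym]
  rw [hhalf, integral_sin_pow_even, prod_eq_choose]
  have hπ : (π : ℝ) ≠ 0 := Real.pi_ne_zero
  field_simp
end
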